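/- arXiv:2306.03045 — 3 statements merged into one kernel-verified Lean document; each statement's English description precedes it below -/
import Mathlib

section
/- For every mean-payoff game G and every ultimately periodic path π = (s_0, a^0), (s_1, a^1), ..., if there exists a strategy profile σ that is a Nash equilibrium from s_0 with π = π(σ, s_0), then there exists a vector z ∈ ℝ^N with z_i ∈ pun_i(G) for every player i, such that for every player i: (a) for all k ∈ ℕ, the pair (s_k, a^k) is z_i-secure for player i, and (b) z_i ≤ pay_i(π). -/
/-! Framework: concurrent game arenas, mean-payoff games, finite-state strategies. -/

/-- A concurrent game arena over players `N`, actions `Ac` and states `St`: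
an initial state and a transition function mapping a state together with a
joint action (one action per player) to a successor state. -/
structure Arena (N Ac St : Type) where
  s0 : St
  tr : St → (N → Ac) → St

/-- A finite-state strategy (transducer) for a player: a finite nonempty set of internal
states `Q`, an initial internal state `q0`, a deterministic internal transition function
`δ` reading joint actions, and an action function `act`. -/
structure Strategy (N Ac : Type) where
  Q : Type
  [finQ : Fintype Q]
  q0 : Q
  δ : Q → (N → Ac) → Q
  act : Q → Ac

attribute [instance] Strategy.finQ

/-- A path in the arena `A` is an infinite sequence of configurations (state, joint action)
in which every successor state is obtained by applying the transition function. -/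
def IsPath {N Ac St : Type} (A : Arena N Ac St) (π : ℕ → St × (N → Ac)) : Prop :=
  ∀ k : ℕ, A.tr (π k).1 (π k).2 = (π (k + 1)).1

/-- A sequence is ultimately periodic if it is of the form `ρ · τ^ω` with `τ` nonempty;
equivalently, there are `K` and `T > 0` such that the sequence is `T`-periodic from `K` on. -/
def UltimatelyPeriodic {α : Type} (π : ℕ → α) : Prop :=
  ∃ K T : ℕ, 0 < T ∧ ∀ k : ℕ, K ≤ k → π (k + T) = π k

/-- The mean-payoff value of a path with respect to a weight function `w` on states:
the `liminf` of the averages of the weights along the state sequence of the path. -/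
noncomputable def pay {N Ac St : Type} (w : St → ℤ) (π : ℕ → St × (N → Ac)) : ℝ :=
  Filter.liminf (fun n : ℕ => (∑ j ∈ Finset.range n, (w (π j).1 : ℝ)) / n) Filter.atTop

/-- Auxiliary run of a strategy profile from state `s`: the current game state together
with the current internal state of each player's transducer. -/
def runAux {N Ac St : Type} (A : Arena N Ac St) (σ : ∀ _ : N, Strategy N Ac) (s : St) :
    ℕ → St × (∀ i : N, (σ i).Q)
  | 0 => (s, fun i => (σ i).q0)
  | k + 1 =>
      let p := runAux A σ s k
      let a : N → Ac := fun i => (σ i).act (p.2 i)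
      (A.tr p.1 a, fun i => (σ i).δ (p.2 i) a)

/-- The unique path `π(σ, s)` induced by the strategy profile `σ` from state `s`:
at each step every player plays the action of its current internal state. -/
def play {N Ac St : Type} (A : Arena N Ac St) (σ : ∀ _ : N, Strategy N Ac) (s : St)
    (k : ℕ) : St × (N → Ac) :=
  ((runAux A σ s k).1, fun i => (σ i).act ((runAux A σ s k).2 i))

/-- The strategy profile `σ` is a Nash equilibrium of the mean-payoff game with weights `w`
from state `s`: no player `i` can increase its payoff by unilaterally switching strategy. -/
def NashFrom {N Ac St : Type} [DecidableEq N] (A : Arena N Ac St) (w : N → St → ℤ)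
    (σ : ∀ _ : N, Strategy N Ac) (s : St) : Prop :=
  ∀ (i : N) (σ' : Strategy N Ac),
    pay (w i) (play A (Function.update σ i σ') s) ≤ pay (w i) (play A σ s)

/-- The punishment value `pun_i(s)`: the infimum over strategy profiles of the coalition
`N ∖ {i}` of the supremum over strategies of player `i` of the payoff of player `i`
from state `s`. -/
noncomputable def pun {N Ac St : Type} [DecidableEq N] (A : Arena N Ac St)
    (w : N → St → ℤ) (i : N) (s : St) : ℝ :=
  ⨅ σ : ∀ _ : N, Strategy N Ac, ⨆ σi : Strategy N Ac,
    pay (w i) (play A (Function.update σ i σi) s)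

/-- A configuration `(s, a)` is `z`-secure for player `i` if every unilateral deviation
of `i` leads to a state whose punishment value for `i` is at most `z`. -/
def ZSecure {N Ac St : Type} [DecidableEq N] (A : Arena N Ac St) (w : N → St → ℤ)
    (i : N) (z : ℝ) (p : St × (N → Ac)) : Prop :=
  ∀ a' : Ac, pun A w i (A.tr p.1 (Function.update p.2 i a')) ≤ z


/-! ### Auxiliary lemmas -/

open Filter

section LiminfHelpers

lemma liminf_le_liminf_of_tendsto_sub {u v : ℕ → ℝ} {B : ℝ}
    (hu : ∀ n, |u n| ≤ B) (hv : ∀ n, |v n| ≤ B)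
    (h : Tendsto (fun n => u n - v n) atTop (nhds 0)) :
    liminf u atTop ≤ liminf v atTop := by
  have hubdd : IsBoundedUnder (· ≥ ·) atTop u :=
    isBoundedUnder_of ⟨-B, fun n => neg_le_of_abs_le (hu n)⟩
  have hvbddle : IsBoundedUnder (· ≤ ·) atTop v :=
    isBoundedUnder_of ⟨B, fun n => le_of_abs_le (hv n)⟩
  have hvbdd : IsBoundedUnder (· ≥ ·) atTop v :=
    isBoundedUnder_of ⟨-B, fun n => neg_le_of_abs_le (hv n)⟩
  refine le_of_forall_pos_le_add fun ε hε => ?_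
  have hev : ∀ᶠ n in atTop, u n ≤ v n + ε := by
    have := Metric.tendsto_nhds.mp h ε hε
    filter_upwards [this] with n hn
    rw [Real.dist_eq, sub_zero] at hn
    have := (abs_sub_lt_iff.mp hn).1
    linarith
  have h1 : liminf u atTop ≤ liminf (fun n => v n + ε) atTop := by
    refine liminf_le_liminf hev hubdd ?_
    exact (isBoundedUnder_of
      ⟨B + ε, fun n => by have := le_of_abs_le (hv n); linarith⟩).isCoboundedUnder_ge
  have h2 : liminf (fun n => v n + ε) atTop = liminf v atTop + ε :=
    liminf_add_const atTop v ε hvbddle.isCoboundedUnder_ge hvbdd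
  linarith [h1, h2]

lemma liminf_eq_liminf_of_tendsto_sub {u v : ℕ → ℝ} {B : ℝ}
    (hu : ∀ n, |u n| ≤ B) (hv : ∀ n, |v n| ≤ B)
    (h : Tendsto (fun n => u n - v n) atTop (nhds 0)) :
    liminf u atTop = liminf v atTop := by
  refine le_antisymm (liminf_le_liminf_of_tendsto_sub hu hv h)
    (liminf_le_liminf_of_tendsto_sub hv hu ?_)
  have : (fun n => v n - u n) = fun n => -(u n - v n) := by funext n; ring
  rw [this]
  simpa using h.neg

lemma liminf_bounds {u : ℕ → ℝ} {B : ℝ} (hu : ∀ n, |u n| ≤ B) :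
    -B ≤ liminf u atTop ∧ liminf u atTop ≤ B := by
  constructor
  · have : liminf (fun _ : ℕ => -B) atTop ≤ liminf u atTop := by
      refine liminf_le_liminf (Eventually.of_forall fun n => neg_le_of_abs_le (hu n)) ?_ ?_
      · exact isBoundedUnder_of ⟨-B, fun _ => le_rfl⟩
      · exact (isBoundedUnder_of ⟨B, fun n => le_of_abs_le (hu n)⟩).isCoboundedUnder_ge
    simpa using this
  · have : liminf u atTop ≤ liminf (fun _ : ℕ => B) atTop := by
      refine liminf_le_liminf (Eventually.of_forall fun n => le_of_abs_le (hu n)) ?_ ?_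
      · exact isBoundedUnder_of ⟨-B, fun n => neg_le_of_abs_le (hu n)⟩
      · exact (isBoundedUnder_of ⟨B, fun _ => le_rfl⟩).isCoboundedUnder_ge
    simpa using this

lemma liminf_shift (u : ℕ → ℝ) (K : ℕ) :
    liminf (fun n => u (n + K)) atTop = liminf u atTop := by
  conv_rhs => rw [← map_add_atTop_eq_nat K]
  rfl

end LiminfHelpers

section PayHelpers

variable {N Ac St : Type}

lemma avg_abs_le (w : St → ℤ) {B : ℝ} (hB0 : 0 ≤ B) (hB : ∀ s, |(w s : ℝ)| ≤ B)
    (π : ℕ → St × (N → Ac)) (n : ℕ) :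
    |(∑ j ∈ Finset.range n, (w (π j).1 : ℝ)) / n| ≤ B := by
  rcases Nat.eq_zero_or_pos n with rfl | hn
  · simpa using hB0
  · rw [abs_div, Nat.abs_cast, div_le_iff₀ (by positivity)]
    calc |∑ j ∈ Finset.range n, (w (π j).1 : ℝ)|
        ≤ ∑ j ∈ Finset.range n, |(w (π j).1 : ℝ)| := Finset.abs_sum_le_sum_abs _ _
      _ ≤ ∑ _j ∈ Finset.range n, B := Finset.sum_le_sum fun j _ => hB _
      _ = n * B := by rw [Finset.sum_const, Finset.card_range, nsmul_eq_mul]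
      _ = B * n := mul_comm _ _

lemma pay_bounds (w : St → ℤ) {B : ℝ} (hB0 : 0 ≤ B) (hB : ∀ s, |(w s : ℝ)| ≤ B)
    (π : ℕ → St × (N → Ac)) : -B ≤ pay w π ∧ pay w π ≤ B :=
  liminf_bounds (avg_abs_le w hB0 hB π)

lemma pay_shift (w : St → ℤ) {B : ℝ} (hB0 : 0 ≤ B) (hB : ∀ s, |(w s : ℝ)| ≤ B)
    (π : ℕ → St × (N → Ac)) (K : ℕ) :
    pay w (fun m => π (K + m)) = pay w π := by
  set u : ℕ → ℝ := fun n => (∑ j ∈ Finset.range n, (w (π j).1 : ℝ)) / n with hu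
  set v : ℕ → ℝ := fun n => (∑ j ∈ Finset.range n, (w (π (K + j)).1 : ℝ)) / n with hv
  have hpay : pay w π = liminf u atTop := rfl
  have hpayv : pay w (fun m => π (K + m)) = liminf v atTop := rfl
  rw [hpay, hpayv, ← liminf_shift u K]
  refine (liminf_eq_liminf_of_tendsto_sub (B := B)
    (fun n => avg_abs_le w hB0 hB π (n + K))
    (fun n => avg_abs_le w hB0 hB (fun m => π (K + m)) n) ?_).symm
  set S : ℝ := ∑ j ∈ Finset.range K, (w (π j).1 : ℝ) with hS
  refine squeeze_zero_norm' ?_ (tendsto_const_div_atTop_nhds_zero_nat (|S| + B * K))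
  filter_upwards [eventually_ge_atTop 1] with n hn
  set T : ℝ := ∑ j ∈ Finset.range n, (w (π (K + j)).1 : ℝ) with hT
  have hx0 : (0:ℝ) < n := by exact_mod_cast hn
  have hy0 : (0:ℝ) ≤ K := Nat.cast_nonneg K
  have hxy : (0:ℝ) < n + K := by linarith
  have hTb : |T| ≤ n * B := by
    calc |T| ≤ ∑ j ∈ Finset.range n, |(w (π (K + j)).1 : ℝ)| := Finset.abs_sum_le_sum_abs _ _
      _ ≤ ∑ _j ∈ Finset.range n, B := Finset.sum_le_sum fun j _ => hB _
      _ = n * B := by rw [Finset.sum_const, Finset.card_range, nsmul_eq_mul]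
  have huN : u (n + K) = (S + T) / ((n : ℝ) + K) := by
    have hsum : ∑ j ∈ Finset.range (n + K), (w (π j).1 : ℝ) = S + T := by
      rw [add_comm n K, Finset.sum_range_add]
    simp only [hu, hsum]
    push_cast
    ring_nf
  have hvN : v n = T / n := rfl
  have hd : u (n + K) - v n = S / ((n:ℝ) + K) - T * K / (((n:ℝ) + K) * n) := by
    rw [huN, hvN]
    field_simp
    ring
  rw [Real.norm_eq_abs, hd]
  have h1 : |S / ((n:ℝ) + K)| ≤ |S| / n := by
    rw [abs_div, abs_of_pos hxy]
    exact div_le_div_of_nonneg_left (abs_nonneg S) hx0 (by linarith)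
  have h2 : |T * K / (((n:ℝ) + K) * n)| ≤ B * K / n := by
    rw [abs_div, abs_of_pos (by positivity : (0:ℝ) < ((n:ℝ) + K) * n), abs_mul,
      Nat.abs_cast]
    rw [div_le_div_iff₀ (by positivity) hx0]
    have h3 : |T| * (K:ℝ) ≤ (n * B) * K := mul_le_mul_of_nonneg_right hTb hy0
    have h4 : |T| * (K:ℝ) * n ≤ ((n:ℝ) * B * K) * n := mul_le_mul_of_nonneg_right h3 hx0.le
    nlinarith [h4, mul_nonneg (mul_nonneg (mul_nonneg hB0 hy0) hy0) hx0.le]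
  calc |S / ((n:ℝ) + K) - T * K / (((n:ℝ) + K) * n)|
      ≤ |S / ((n:ℝ) + K)| + |T * K / (((n:ℝ) + K) * n)| := abs_sub _ _
    _ ≤ |S| / n + B * K / n := add_le_add h1 h2
    _ = (|S| + B * K) / n := (add_div _ _ _).symm

end PayHelpers


section RunHelpers

variable {N Ac St : Type}

instance instNonemptyStrategy [Nonempty Ac] : Nonempty (Strategy N Ac) :=
  ⟨{ Q := Unit, q0 := (), δ := fun _ _ => (), act := fun _ => Classical.arbitrary Ac }⟩

lemma strat_q0_heq {S T : Strategy N Ac} (e : S = T) : HEq S.q0 T.q0 := by subst e; rfl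

lemma strat_act_heq {S T : Strategy N Ac} (e : S = T) {x : S.Q} {y : T.Q} (h : HEq x y) :
    S.act x = T.act y := by subst e; rw [eq_of_heq h]

lemma strat_delta_heq {S T : Strategy N Ac} (e : S = T) {x : S.Q} {y : T.Q} (h : HEq x y)
    (c : N → Ac) : HEq (S.δ x c) (T.δ y c) := by subst e; rw [eq_of_heq h]

lemma pun_le_of [DecidableEq N] [Nonempty Ac] (A : Arena N Ac St) (w : N → St → ℤ) (i : N)
    (s : St) {B : ℝ} (hB0 : 0 ≤ B) (hB : ∀ s', |(w i s' : ℝ)| ≤ B) {r : ℝ}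
    (ρ : ∀ _ : N, Strategy N Ac)
    (hρ : ∀ σi : Strategy N Ac, pay (w i) (play A (Function.update ρ i σi) s) ≤ r) :
    pun A w i s ≤ r := by
  have hbdd : BddBelow (Set.range fun σ' : ∀ _ : N, Strategy N Ac =>
      ⨆ σi : Strategy N Ac, pay (w i) (play A (Function.update σ' i σi) s)) := by
    refine ⟨-B, ?_⟩
    rintro x ⟨σ', rfl⟩
    have hub : BddAbove (Set.range fun σi : Strategy N Ac =>
        pay (w i) (play A (Function.update σ' i σi) s)) := by
      refine ⟨B, ?_⟩
      rintro y ⟨σi, rfl⟩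
      exact (pay_bounds (w i) hB0 hB _).2
    exact le_trans (pay_bounds (w i) hB0 hB _).1 (le_ciSup hub (Classical.arbitrary _))
  exact le_trans (ciInf_le hbdd ρ) (ciSup_le hρ)

lemma deviation_pun_le [DecidableEq N] [Nonempty Ac]
    (A : Arena N Ac St) (w : N → St → ℤ) {B : ℝ} (hB0 : 0 ≤ B)
    (π : ℕ → St × (N → Ac)) (hπ : IsPath A π)
    (σ : ∀ _ : N, Strategy N Ac)
    (hN : NashFrom A w σ (π 0).1) (hp : play A σ (π 0).1 = π)
    (i : N) (hB : ∀ s', |(w i s' : ℝ)| ≤ B)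
    (k₀ : ℕ) (a₀' : Ac) :
    pun A w i (A.tr (π k₀).1 (Function.update (π k₀).2 i a₀')) ≤ pay (w i) π := by
  set s0 := (π 0).1 with hs0
  set b := Function.update (π k₀).2 i a₀' with hb
  set sstar := A.tr (π k₀).1 b with hsstar
  have hstate : ∀ m, (runAux A σ s0 m).1 = (π m).1 :=
    fun m => congrArg Prod.fst (congrFun hp m)
  have hact : ∀ m, (fun j => (σ j).act ((runAux A σ s0 m).2 j)) = (π m).2 :=
    fun m => congrArg Prod.snd (congrFun hp m)
  have hqrec : ∀ m j, (runAux A σ s0 (m + 1)).2 j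
      = (σ j).δ ((runAux A σ s0 m).2 j) ((π m).2) := by
    intro m j
    show (σ j).δ ((runAux A σ s0 m).2 j)
        (fun j' => (σ j').act ((runAux A σ s0 m).2 j')) = _
    rw [hact m]
  set qdev : ∀ j, (σ j).Q := fun j => (σ j).δ ((runAux A σ s0 k₀).2 j) b with hqdev
  set ρ : ∀ _ : N, Strategy N Ac := fun j =>
    { Q := (σ j).Q, finQ := (σ j).finQ, q0 := qdev j, δ := (σ j).δ, act := (σ j).act } with hρ
  apply pun_le_of A w i sstar hB0 hB ρ
  intro σi
  set D : Strategy N Ac :=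
    { Q := Fin (k₀ + 1) ⊕ σi.Q
      q0 := Sum.inl ⟨0, Nat.succ_pos _⟩
      δ := fun q c => match q with
        | Sum.inl m => if h : (m : ℕ) < k₀ then Sum.inl ⟨(m : ℕ) + 1, by omega⟩
            else Sum.inr σi.q0
        | Sum.inr q => Sum.inr (σi.δ q c)
      act := fun q => match q with
        | Sum.inl m => if (m : ℕ) < k₀ then (π (m : ℕ)).2 i else a₀'
        | Sum.inr q => σi.act q } with hD
  set ν := Function.update σ i D with hν
  set η := Function.update ρ i σi with hη
  have eνi : ν i = D := Function.update_self i D σ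
  have eνj : ∀ j, j ≠ i → ν j = σ j := fun j hj => Function.update_of_ne hj D σ
  have eηi : η i = σi := Function.update_self i σi ρ
  have eηj : ∀ j, j ≠ i → η j = ρ j := fun j hj => Function.update_of_ne hj σi ρ
  -- prefix invariant
  have prefixInv : ∀ m (hm : m ≤ k₀),
      (runAux A ν s0 m).1 = (π m).1 ∧
      HEq ((runAux A ν s0 m).2 i)
        (Sum.inl (⟨m, Nat.lt_succ_of_le hm⟩ : Fin (k₀ + 1)) : Fin (k₀ + 1) ⊕ σi.Q) ∧
      ∀ j, j ≠ i → HEq ((runAux A ν s0 m).2 j) ((runAux A σ s0 m).2 j) := by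
    intro m
    induction m with
    | zero =>
      intro _
      refine ⟨rfl, ?_, ?_⟩
      · exact strat_q0_heq eνi
      · intro j hj
        exact strat_q0_heq (eνj j hj)
    | succ m ih =>
      intro hm1
      have hmlt : m < k₀ := Nat.lt_of_succ_le hm1
      obtain ⟨h1, h2, h3⟩ := ih (le_of_lt hmlt)
      have haν : (fun j => (ν j).act ((runAux A ν s0 m).2 j)) = (π m).2 := by
        funext j
        by_cases hj : j = i
        · subst hj
          rw [strat_act_heq eνi h2]
          show (if m < k₀ then (π m).2 j else a₀') = (π m).2 j
          rw [if_pos hmlt]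
        · rw [strat_act_heq (eνj j hj) (h3 j hj)]
          exact congrFun (hact m) j
      refine ⟨?_, ?_, ?_⟩
      · calc (runAux A ν s0 (m + 1)).1
            = A.tr (runAux A ν s0 m).1 (fun j => (ν j).act ((runAux A ν s0 m).2 j)) := rfl
          _ = A.tr (π m).1 ((π m).2) := by rw [h1, haν]
          _ = (π (m + 1)).1 := hπ m
      · have hr : (runAux A ν s0 (m + 1)).2 i
            = (ν i).δ ((runAux A ν s0 m).2 i)
              (fun j => (ν j).act ((runAux A ν s0 m).2 j)) := rfl
        rw [hr, haν]
        refine heq_of_heq_of_eq (strat_delta_heq eνi h2 ((π m).2)) ?_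
        exact dif_pos hmlt
      · intro j hj
        have hr : (runAux A ν s0 (m + 1)).2 j
            = (ν j).δ ((runAux A ν s0 m).2 j)
              (fun j' => (ν j').act ((runAux A ν s0 m).2 j')) := rfl
        rw [hr, haν]
        exact heq_of_heq_of_eq (strat_delta_heq (eνj j hj) (h3 j hj) ((π m).2))
          (hqrec m j).symm
  obtain ⟨hk1, hk2, hk3⟩ := prefixInv k₀ le_rfl
  have hbν : (fun j => (ν j).act ((runAux A ν s0 k₀).2 j)) = b := by
    funext j
    by_cases hj : j = i
    · subst hj
      rw [strat_act_heq eνi hk2]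
      show (if k₀ < k₀ then (π k₀).2 j else a₀') = b j
      rw [if_neg (lt_irrefl k₀), hb]
      exact (Function.update_self j a₀' (π k₀).2).symm
    · rw [strat_act_heq (eνj j hj) (hk3 j hj), congrFun (hact k₀) j, hb]
      exact (Function.update_of_ne hj a₀' (π k₀).2).symm
  have hS1 : (runAux A ν s0 (k₀ + 1)).1 = sstar := by
    calc (runAux A ν s0 (k₀ + 1)).1
        = A.tr (runAux A ν s0 k₀).1 (fun j => (ν j).act ((runAux A ν s0 k₀).2 j)) := rfl
      _ = A.tr (π k₀).1 b := by rw [hk1, hbν]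
  have hS2 : HEq ((runAux A ν s0 (k₀ + 1)).2 i) (Sum.inr σi.q0 : Fin (k₀ + 1) ⊕ σi.Q) := by
    have hr : (runAux A ν s0 (k₀ + 1)).2 i
        = (ν i).δ ((runAux A ν s0 k₀).2 i)
          (fun j => (ν j).act ((runAux A ν s0 k₀).2 j)) := rfl
    rw [hr, hbν]
    refine heq_of_heq_of_eq (strat_delta_heq eνi hk2 b) ?_
    exact dif_neg (lt_irrefl k₀)
  have hS3 : ∀ j, j ≠ i → HEq ((runAux A ν s0 (k₀ + 1)).2 j) (qdev j) := by
    intro j hj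
    have hr : (runAux A ν s0 (k₀ + 1)).2 j
        = (ν j).δ ((runAux A ν s0 k₀).2 j)
          (fun j' => (ν j').act ((runAux A ν s0 k₀).2 j')) := rfl
    rw [hr, hbν]
    exact strat_delta_heq (eνj j hj) (hk3 j hj) b
  -- action agreement on the tail, given the invariant
  have actsOf : ∀ m,
      ((runAux A ν s0 (k₀ + 1 + m)).1 = (runAux A η sstar m).1 ∧
       (∃ q : σi.Q, HEq ((runAux A ν s0 (k₀ + 1 + m)).2 i)
            (Sum.inr q : Fin (k₀ + 1) ⊕ σi.Q) ∧ HEq ((runAux A η sstar m).2 i) q) ∧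
       (∀ j, j ≠ i → ∃ q : (σ j).Q, HEq ((runAux A ν s0 (k₀ + 1 + m)).2 j) q ∧
            HEq ((runAux A η sstar m).2 j) q)) →
      (fun j => (ν j).act ((runAux A ν s0 (k₀ + 1 + m)).2 j))
        = (fun j => (η j).act ((runAux A η sstar m).2 j)) := by
    rintro m ⟨g1, ⟨qi, gi1, gi2⟩, g3⟩
    funext j
    by_cases hj : j = i
    · subst hj
      rw [strat_act_heq eνi gi1, strat_act_heq eηi gi2]
    · obtain ⟨q, hq1, hq2⟩ := g3 j hj
      rw [strat_act_heq (eνj j hj) hq1, strat_act_heq (eηj j hj) hq2]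
  -- tail invariant
  have tailInv : ∀ m,
      (runAux A ν s0 (k₀ + 1 + m)).1 = (runAux A η sstar m).1 ∧
      (∃ q : σi.Q, HEq ((runAux A ν s0 (k₀ + 1 + m)).2 i)
          (Sum.inr q : Fin (k₀ + 1) ⊕ σi.Q) ∧ HEq ((runAux A η sstar m).2 i) q) ∧
      (∀ j, j ≠ i → ∃ q : (σ j).Q, HEq ((runAux A ν s0 (k₀ + 1 + m)).2 j) q ∧
          HEq ((runAux A η sstar m).2 j) q) := by
    intro m
    induction m with
    | zero =>
      refine ⟨hS1, ⟨σi.q0, hS2, strat_q0_heq eηi⟩, ?_⟩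
      intro j hj
      exact ⟨qdev j, hS3 j hj, strat_q0_heq (eηj j hj)⟩
    | succ m ih =>
      obtain ⟨g1, ⟨qi, gi1, gi2⟩, g3⟩ := ih
      have hacts := actsOf m ⟨g1, ⟨qi, gi1, gi2⟩, g3⟩
      refine ⟨?_, ⟨σi.δ qi (fun j => (η j).act ((runAux A η sstar m).2 j)), ?_, ?_⟩, ?_⟩
      · show (runAux A ν s0 (k₀ + 1 + m + 1)).1 = (runAux A η sstar (m + 1)).1
        show A.tr (runAux A ν s0 (k₀ + 1 + m)).1
            (fun j => (ν j).act ((runAux A ν s0 (k₀ + 1 + m)).2 j))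
          = A.tr (runAux A η sstar m).1
            (fun j => (η j).act ((runAux A η sstar m).2 j))
        rw [g1, hacts]
      · show HEq ((runAux A ν s0 (k₀ + 1 + m + 1)).2 i)
          (Sum.inr (σi.δ qi (fun j => (η j).act ((runAux A η sstar m).2 j)))
            : Fin (k₀ + 1) ⊕ σi.Q)
        have hr : (runAux A ν s0 (k₀ + 1 + m + 1)).2 i
            = (ν i).δ ((runAux A ν s0 (k₀ + 1 + m)).2 i)
              (fun j => (ν j).act ((runAux A ν s0 (k₀ + 1 + m)).2 j)) := rfl
        rw [hr, hacts]
        exact heq_of_heq_of_eq (strat_delta_heq eνi gi1 _) rfl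
      · exact strat_delta_heq eηi gi2 _
      · intro j hj
        obtain ⟨q, hq1, hq2⟩ := g3 j hj
        refine ⟨(σ j).δ q (fun j' => (η j').act ((runAux A η sstar m).2 j')), ?_, ?_⟩
        · show HEq ((runAux A ν s0 (k₀ + 1 + m + 1)).2 j)
            ((σ j).δ q (fun j' => (η j').act ((runAux A η sstar m).2 j')))
          have hr : (runAux A ν s0 (k₀ + 1 + m + 1)).2 j
              = (ν j).δ ((runAux A ν s0 (k₀ + 1 + m)).2 j)
                (fun j' => (ν j').act ((runAux A ν s0 (k₀ + 1 + m)).2 j')) := rfl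
          rw [hr, hacts]
          exact strat_delta_heq (eνj j hj) hq1 _
        · exact strat_delta_heq (eηj j hj) hq2 _
  -- the tail of the deviated play coincides with the punished play
  have hplayeq : ∀ m, play A η sstar m = play A ν s0 (k₀ + 1 + m) := by
    intro m
    obtain ⟨g1, gi, g3⟩ := tailInv m
    have hacts := actsOf m ⟨g1, gi, g3⟩
    show ((runAux A η sstar m).1, fun j => (η j).act ((runAux A η sstar m).2 j))
        = ((runAux A ν s0 (k₀ + 1 + m)).1,
           fun j => (ν j).act ((runAux A ν s0 (k₀ + 1 + m)).2 j))
    rw [g1, hacts]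
  have hshift : pay (w i) (play A η sstar) = pay (w i) (play A ν s0) := by
    have he : play A η sstar = fun m => play A ν s0 (k₀ + 1 + m) := funext hplayeq
    rw [he]
    exact pay_shift (w i) hB0 hB (play A ν s0) (k₀ + 1)
  calc pay (w i) (play A η sstar) = pay (w i) (play A ν s0) := hshift
    _ ≤ pay (w i) (play A σ s0) := hN i D
    _ = pay (w i) π := by rw [hs0, hp]

end RunHelpers

/-- **(1) ⟹ (2) of the Nash characterisation.**
For every mean-payoff game and every ultimately periodic path `π`, if some Nash
equilibrium `σ` from the initial state of `π` induces `π`, then there is a vector `z`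
with `z i ∈ pun_i(G)` for every player `i` such that, for every player `i`, every
configuration of `π` is `z i`-secure for `i` and `z i ≤ pay_i(π)`. -/
theorem nash_implies_secure_values {N Ac St : Type}
    [Fintype N] [Nonempty N] [DecidableEq N]
    [Fintype Ac] [Nonempty Ac] [Fintype St] [Nonempty St]
    (A : Arena N Ac St) (w : N → St → ℤ)
    (π : ℕ → St × (N → Ac)) (hπ : IsPath A π) (hup : UltimatelyPeriodic π)
    (h : ∃ σ : ∀ _ : N, Strategy N Ac,
        NashFrom A w σ (π 0).1 ∧ play A σ (π 0).1 = π) :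
    ∃ z : N → ℝ, ∀ i : N,
        z i ∈ Set.range (pun A w i) ∧
        (∀ k : ℕ, ZSecure A w i (z i) (π k)) ∧
        z i ≤ pay (w i) π := by
  obtain ⟨σ, hN, hp⟩ := h
  obtain ⟨B₀, hB₀⟩ := Finite.exists_le (fun p : N × St => |(w p.1 p.2 : ℝ)|)
  set B := max B₀ 0 with hBdef
  have hB0 : (0 : ℝ) ≤ B := le_max_right _ _
  have hB : ∀ (i : N) (s : St), |(w i s : ℝ)| ≤ B :=
    fun i s => le_trans (hB₀ (i, s)) (le_max_left _ _)
  have Hmax : ∀ i : N, ∃ s : St,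
      (∃ k a', s = A.tr (π k).1 (Function.update (π k).2 i a')) ∧
      ∀ k a', pun A w i (A.tr (π k).1 (Function.update (π k).2 i a')) ≤ pun A w i s := by
    intro i
    set Dev : Set St := Set.range
      (fun p : ℕ × Ac => A.tr (π p.1).1 (Function.update (π p.1).2 i p.2)) with hDev
    have hfin : Dev.Finite := Set.toFinite Dev
    have hne : Dev.Nonempty := ⟨_, ⟨(0, Classical.arbitrary Ac), rfl⟩⟩
    obtain ⟨s, hsmem, hsmax⟩ := Finset.exists_max_image hfin.toFinset (pun A w i)
      (by rwa [← Set.Finite.toFinset_nonempty hfin] at hne)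
    refine ⟨s, ?_, ?_⟩
    · obtain ⟨⟨k, a'⟩, rfl⟩ := hfin.mem_toFinset.mp hsmem
      exact ⟨k, a', rfl⟩
    · intro k a'
      exact hsmax _ (hfin.mem_toFinset.mpr ⟨(k, a'), rfl⟩)
  choose f hf1 hf2 using Hmax
  refine ⟨fun i => pun A w i (f i), fun i => ⟨⟨f i, rfl⟩, ?_, ?_⟩⟩
  · intro k a'
    exact hf2 i k a'
  · obtain ⟨k, a', hk⟩ := hf1 i
    show pun A w i (f i) ≤ pay (w i) π
    rw [hk]
    exact deviation_pun_le A w hB0 π hπ σ hN hp i (hB i) k a'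
end

section
/- For every mean-payoff game G and every ultimately periodic path π = (s_0, a^0), (s_1, a^1), ..., if there exists a vector z ∈ ℝ^N with z_i ∈ pun_i(G) for every player i such that for every player i: (a) for all k ∈ ℕ, the pair (s_k, a^k) is z_i-secure for player i, and (b) z_i ≤ pay_i(π), then there exists a strategy profile σ that is a Nash equilibrium from s_0 with π = π(σ, s_0). -/
open Filter Finset


/-- If partial sums are at most `n*c + C`, the liminf of averages is at most `c`. -/
lemma liminf_avg_le_of_partial_le (u : ℕ → ℝ) (L c C : ℝ)
    (hL : ∀ n, L ≤ u n) (h : ∀ n : ℕ, (∑ j ∈ range n, u j) ≤ n * c + C) :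
    Filter.liminf (fun n : ℕ => (∑ j ∈ range n, u j) / n) Filter.atTop ≤ c := by
  set f : ℕ → ℝ := fun n => (∑ j ∈ range n, u j) / n with hf
  set g : ℕ → ℝ := fun n => c + C / n with hg
  have hgt : Tendsto g atTop (nhds c) := by
    have : Tendsto (fun n : ℕ => C / n) atTop (nhds 0) :=
      tendsto_const_nhds.div_atTop tendsto_natCast_atTop_atTop
    simpa [hg] using tendsto_const_nhds.add this
  have hglim : Filter.liminf g atTop = c := hgt.liminf_eq
  have hfg : ∀ᶠ n : ℕ in atTop, f n ≤ g n := by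
    filter_upwards [eventually_gt_atTop 0] with n hn
    have hn' : (0:ℝ) < n := by exact_mod_cast hn
    rw [hf, hg]
    rw [div_le_iff₀ hn']
    calc (∑ j ∈ range n, u j) ≤ n * c + C := h n
    _ = (c + C / n) * n := by field_simp
  have hfb : IsBoundedUnder (· ≥ ·) atTop f := by
    refine isBoundedUnder_of ⟨min L 0, fun n => ?_⟩
    rcases Nat.eq_zero_or_pos n with rfl | hn
    · simp [hf, min_le_iff]
    · have hn' : (0:ℝ) < n := by exact_mod_cast hn
      have : (n : ℝ) * L ≤ ∑ j ∈ range n, u j := by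
        calc (n:ℝ) * L = ∑ _j ∈ range n, L := by simp [mul_comm]
        _ ≤ _ := Finset.sum_le_sum fun j _ => hL j
      have : L ≤ f n := by
        rw [hf, le_div_iff₀ hn']
        simpa [mul_comm] using this
      exact le_trans (min_le_left _ _) this
  have hgc : IsCoboundedUnder (· ≥ ·) atTop g := by
    apply IsBoundedUnder.isCoboundedUnder_ge
    exact hgt.isBoundedUnder_le
  calc Filter.liminf f atTop ≤ Filter.liminf g atTop :=
        Filter.liminf_le_liminf hfg hfb hgc
  _ = c := hglim

/-- If partial sums are at least `n*c - C`, the liminf of averages is at least `c`. -/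
lemma le_liminf_avg_of_partial_ge (u : ℕ → ℝ) (U c C : ℝ)
    (hU : ∀ n, u n ≤ U) (h : ∀ n : ℕ, n * c - C ≤ ∑ j ∈ range n, u j) :
    c ≤ Filter.liminf (fun n : ℕ => (∑ j ∈ range n, u j) / n) Filter.atTop := by
  set f : ℕ → ℝ := fun n => (∑ j ∈ range n, u j) / n with hf
  set g : ℕ → ℝ := fun n => c - C / n with hg
  have hgt : Tendsto g atTop (nhds c) := by
    have : Tendsto (fun n : ℕ => C / n) atTop (nhds 0) :=
      tendsto_const_nhds.div_atTop tendsto_natCast_atTop_atTop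
    simpa [hg] using tendsto_const_nhds.sub this
  have hglim : Filter.liminf g atTop = c := hgt.liminf_eq
  have hfg : ∀ᶠ n : ℕ in atTop, g n ≤ f n := by
    filter_upwards [eventually_gt_atTop 0] with n hn
    have hn' : (0:ℝ) < n := by exact_mod_cast hn
    rw [hf, hg, le_div_iff₀ hn']
    calc (c - C / n) * n = n * c - C := by field_simp
    _ ≤ _ := h n
  have hgb : IsBoundedUnder (· ≥ ·) atTop g := hgt.isBoundedUnder_ge
  have hfc : IsCoboundedUnder (· ≥ ·) atTop f := by
    apply IsBoundedUnder.isCoboundedUnder_ge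
    refine isBoundedUnder_of ⟨max U 0, fun n => ?_⟩
    rcases Nat.eq_zero_or_pos n with rfl | hn
    · simp [hf, le_max_iff]
    · have hn' : (0:ℝ) < n := by exact_mod_cast hn
      have hs : ∑ j ∈ range n, u j ≤ (n : ℝ) * U := by
        calc (∑ j ∈ range n, u j) ≤ ∑ _j ∈ range n, U := Finset.sum_le_sum fun j _ => hU j
        _ = (n:ℝ) * U := by simp [mul_comm]
      have : f n ≤ U := by
        rw [hf, div_le_iff₀ hn']
        simpa [mul_comm] using hs
      exact le_trans this (le_max_left _ _)
  calc c = Filter.liminf g atTop := hglim.symm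
  _ ≤ Filter.liminf f atTop := Filter.liminf_le_liminf hfg hgb hfc

/-- For eventually periodic sequences, partial sums of the centered sequence are bounded,
hence the cycle mean bounds the liminf average from below. -/
lemma le_liminf_avg_of_periodic (u : ℕ → ℝ) (U : ℝ) (K T : ℕ) (hT : 0 < T)
    (hU : ∀ n, u n ≤ U) (hper : ∀ k, K ≤ k → u (k + T) = u k) :
    (∑ j ∈ Finset.Ico K (K + T), u j) / T ≤
      Filter.liminf (fun n : ℕ => (∑ j ∈ range n, u j) / n) Filter.atTop := by
  set μ : ℝ := (∑ j ∈ Finset.Ico K (K + T), u j) / T with hμ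
  set v : ℕ → ℝ := fun j => u j - μ with hv
  set S : ℕ → ℝ := fun n => ∑ j ∈ range n, v j with hS
  -- windows of length T starting at n ≥ K sum to 0
  have hwin : ∀ n, K ≤ n → (∑ j ∈ Finset.Ico n (n + T), v j) = 0 := by
    intro n hn
    induction n, hn using Nat.le_induction with
    | base =>
      have hT' : (T : ℝ) ≠ 0 := by exact_mod_cast hT.ne'
      have : (∑ j ∈ Finset.Ico K (K + T), v j)
          = (∑ j ∈ Finset.Ico K (K + T), u j) - T * μ := by
        simp [hv, Finset.sum_sub_distrib, Nat.card_Ico, mul_comm]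
      rw [this, hμ]
      field_simp
      ring
    | succ n hn ih =>
      have h1 : ∑ j ∈ Finset.Ico n (n + T), v j
          = v n + ∑ j ∈ Finset.Ico (n+1) (n + T), v j :=
        Finset.sum_eq_sum_Ico_succ_bot (by omega) _
      have h2 : ∑ j ∈ Finset.Ico (n+1) (n + 1 + T), v j
          = (∑ j ∈ Finset.Ico (n+1) (n + T), v j) + v (n + T) := by
        have : n + 1 + T = (n + T) + 1 := by omega
        rw [this, Finset.sum_Ico_succ_top (by omega)]
      have hv' : v (n + T) = v n := by simp [hv, hper n hn]
      rw [h2, hv']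
      linarith [h1, ih]
  -- S is T-periodic from K on
  have hSper : ∀ n, K ≤ n → S (n + T) = S n := by
    intro n hn
    have : S (n + T) = S n + ∑ j ∈ Finset.Ico n (n + T), v j := by
      rw [hS]
      simp only [Finset.range_eq_Ico]
      rw [← Finset.sum_Ico_consecutive _ (Nat.zero_le n) (by omega : n ≤ n + T)]
    rw [this, hwin n hn, add_zero]
  -- every S n equals some S m with m < K + T
  have hval : ∀ n, ∃ m, m < K + T ∧ S n = S m := by
    intro n
    induction n using Nat.strong_induction_on with
    | _ n ih =>
      by_cases hn : n < K + T
      · exact ⟨n, hn, rfl⟩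
      · push_neg at hn
        obtain ⟨m, hm, he⟩ := ih (n - T) (by omega)
        refine ⟨m, hm, ?_⟩
        have : n - T + T = n := by omega
        rw [← this, hSper (n - T) (by omega)] at *
        exact he
  -- hence S is bounded
  have hbd : ∃ C, ∀ n, |S n| ≤ C := by
    refine ⟨∑ m ∈ range (K + T), |S m|, fun n => ?_⟩
    obtain ⟨m, hm, he⟩ := hval n
    rw [he]
    exact Finset.single_le_sum (f := fun m => |S m|) (fun _ _ => abs_nonneg _)
      (Finset.mem_range.mpr hm)
  obtain ⟨C, hC⟩ := hbd
  apply le_liminf_avg_of_partial_ge u U _ C hU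
  intro n
  have h1 : ∑ j ∈ range n, u j = S n + n * μ := by
    simp [hS, hv, Finset.sum_sub_distrib, mul_comm]
  have := (abs_le.mp (hC n)).1
  linarith



/-- Canonical representative of `n` for a sequence that is `T`-periodic from `K` on. -/
def repf (K T n : ℕ) : ℕ := if n < K + T then n else K + (n - K) % T

/-- Successor on canonical representatives. -/
def nxtf (K T m : ℕ) : ℕ := if m + 1 < K + T then m + 1 else K

lemma repf_lt {K T : ℕ} (hT : 0 < T) (n : ℕ) : repf K T n < K + T := by
  unfold repf; split
  · assumption
  · have := Nat.mod_lt (n - K) hT; omega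

lemma nxtf_lt {K T : ℕ} (hT : 0 < T) (m : ℕ) : nxtf K T m < K + T := by
  unfold nxtf; split <;> omega

lemma repf_succ {K T : ℕ} (hT : 0 < T) (n : ℕ) :
    repf K T (n + 1) = nxtf K T (repf K T n) := by
  unfold repf nxtf
  rcases lt_trichotomy (n + 1) (K + T) with h1 | h1 | h1
  · have h2 : n < K + T := by omega
    simp [h1, h2]
  · have h2 : n < K + T := by omega
    have h3 : ¬ (n + 1 < K + T) := by omega
    have h4 : n + 1 - K = T := by omega
    simp [h2, h3, h4, Nat.mod_self]
  · have h2 : ¬ (n < K + T) := by omega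
    have h3 : ¬ (n + 1 < K + T) := by omega
    simp only [h2, h3, if_false]
    set r := (n - K) % T with hrdef
    set q := (n - K) / T with hqdef
    have hr : r < T := Nat.mod_lt _ hT
    have hq : T * q + r = n - K := Nat.div_add_mod (n - K) T
    have h5 : n + 1 - K = r + 1 + T * q := by omega
    rw [h5, Nat.add_mul_mod_self_left]
    by_cases h6 : r + 1 < T
    · rw [Nat.mod_eq_of_lt h6, if_pos (by omega)]; omega
    · have h7 : r + 1 = T := by omega
      rw [h7, Nat.mod_self, if_neg (by omega)]; omega

lemma repf_sub {K T n : ℕ} (hT : 0 < T) (hn : K + T ≤ n) :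
    repf K T n = repf K T (n - T) := by
  unfold repf
  have h1 : ¬ (n < K + T) := by omega
  simp only [h1, if_false]
  by_cases h2 : n - T < K + T
  · have h3 : n - K = (n - T - K) + T := by omega
    rw [h3, Nat.add_mod_right, Nat.mod_eq_of_lt (by omega)]
    simp only [h2, if_true]
    omega
  · simp only [h2, if_false]
    have h3 : n - K = (n - T - K) + T := by omega
    rw [h3, Nat.add_mod_right]

lemma repf_eq_self {K T n : ℕ} (hn : n < K + T) : repf K T n = n := by
  unfold repf; simp [hn]

lemma repf_apply {γ : Type*} (f : ℕ → γ) {K T : ℕ} (hT : 0 < T)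
    (hper : ∀ k, K ≤ k → f (k + T) = f k) (n : ℕ) : f (repf K T n) = f n := by
  induction n using Nat.strong_induction_on with
  | _ n ih =>
    by_cases hn : n < K + T
    · rw [repf_eq_self hn]
    · push_neg at hn
      have h1 : repf K T n = repf K T (n - T) := repf_sub hT hn
      have h3 : n - T + T = n := by omega
      have h2 : f (n - T) = f n := by
        calc f (n - T) = f (n - T + T) := (hper (n - T) (by omega)).symm
        _ = f n := by rw [h3]
      rw [h1, ih (n - T) (by omega), h2]

lemma repf_periodic {K T k : ℕ} (hT : 0 < T) (hk : K ≤ k) :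
    repf K T (k + T) = repf K T k := by
  have := repf_sub (K := K) hT (n := k + T) (by omega)
  simpa using this

-- strategy transport lemmas
lemma strat_act_heq_s5 {N Ac : Type} {s₁ s₂ : Strategy N Ac} (e : s₁ = s₂) {x : s₁.Q} {y : s₂.Q}
    (h : HEq x y) : s₁.act x = s₂.act y := by subst e; rw [eq_of_heq h]
lemma strat_δ_heq {N Ac : Type} {s₁ s₂ : Strategy N Ac} (e : s₁ = s₂) {x : s₁.Q} {y : s₂.Q}
    (m : N → Ac) (h : HEq x y) : HEq (s₁.δ x m) (s₂.δ y m) := by subst e; rw [eq_of_heq h]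
lemma strat_q0_heq_s5 {N Ac : Type} {s₁ s₂ : Strategy N Ac} (e : s₁ = s₂) :
    HEq s₁.q0 s₂.q0 := by subst e; rfl

section Punishment
variable {N Ac St : Type} [DecidableEq N]
variable (A : Arena N Ac St) (i : N) (σP : ∀ _ : N, Strategy N Ac)

/-- One step of the punishment dynamics: the coalition plays its transducer actions,
the deviator `i` plays `a`. -/
def pstep (v : St × (∀ j : N, (σP j).Q)) (a : Ac) : St × (∀ j : N, (σP j).Q) :=
  let m : N → Ac := Function.update (fun j => (σP j).act (v.2 j)) i a
  (A.tr v.1 m, fun j => (σP j).δ (v.2 j) m)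

/-- Trajectory of the punishment dynamics driven by a deviator action sequence `α`. -/
def ptraj (v : St × (∀ j : N, (σP j).Q)) (α : ℕ → Ac) : ℕ → St × (∀ j : N, (σP j).Q)
  | 0 => v
  | n + 1 => pstep A i σP (ptraj v α n) (α n)

lemma ptraj_congr (v : St × (∀ j : N, (σP j).Q)) (α β : ℕ → Ac) (n : ℕ)
    (h : ∀ k, k < n → α k = β k) : ptraj A i σP v α n = ptraj A i σP v β n := by
  induction n with
  | zero => rfl
  | succ n ih =>
    rw [ptraj, ptraj, ih (fun k hk => h k (by omega)), h n (by omega)]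

end Punishment


/-- Realizing an ultimately periodic deviator action sequence by a finite-state strategy. -/
lemma ptraj_realize {N Ac St : Type} [DecidableEq N]
    (A : Arena N Ac St) (i : N) (σP : ∀ _ : N, Strategy N Ac)
    (s'' : St) (α : ℕ → Ac) (M P : ℕ) (hP : 0 < P)
    (hα : ∀ k, M ≤ k → α (k + P) = α k) :
    ∃ σi : Strategy N Ac, ∀ n,
      (runAux A (Function.update σP i σi) s'' n).1
        = (ptraj A i σP (s'', fun j => (σP j).q0) α n).1 := by
  set σi : Strategy N Ac :=
    ⟨Fin (M+P), ⟨0, by omega⟩, fun q _ => ⟨nxtf M P q.1, nxtf_lt hP _⟩, fun q => α q.1⟩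
    with hσi
  refine ⟨σi, ?_⟩
  set σU := Function.update σP i σi with hσU
  set v0 : St × (∀ j : N, (σP j).Q) := (s'', fun j => (σP j).q0) with hv0
  have eU : ∀ j, j ≠ i → σU j = σP j := fun j hj => Function.update_of_ne hj _ _
  have eUi : σU i = σi := Function.update_self _ _ _
  suffices H : ∀ n, (runAux A σU s'' n).1 = (ptraj A i σP v0 α n).1
      ∧ (∀ j, j ≠ i → HEq ((runAux A σU s'' n).2 j) ((ptraj A i σP v0 α n).2 j))
      ∧ HEq ((runAux A σU s'' n).2 i) (⟨repf M P n, repf_lt hP n⟩ : Fin (M+P)) by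
    exact fun n => (H n).1
  intro n
  induction n with
  | zero =>
    refine ⟨rfl, fun j hj => strat_q0_heq_s5 (eU j hj), ?_⟩
    have h0 : (⟨repf M P 0, repf_lt hP 0⟩ : Fin (M+P)) = σi.q0 := by
      apply Fin.ext
      simp [repf_eq_self (show 0 < M + P by omega), hσi]
      rfl
    rw [h0]
    exact strat_q0_heq_s5 eUi
  | succ n ih =>
    obtain ⟨ih1, ih2, ih3⟩ := ih
    set r := runAux A σU s'' n with hr
    set X := ptraj A i σP v0 α n with hX
    set mU : N → Ac := fun j => (σU j).act (r.2 j) with hmU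
    set mX : N → Ac := Function.update (fun j => (σP j).act (X.2 j)) i (α n) with hmX
    have hm : mU = mX := by
      funext j
      by_cases hj : j = i
      · subst hj
        have h1 : mU j = σi.act (⟨repf M P n, repf_lt hP n⟩ : Fin (M+P)) :=
          strat_act_heq_s5 eUi ih3
        have h2 : σi.act (⟨repf M P n, repf_lt hP n⟩ : Fin (M+P)) = α (repf M P n) := rfl
        have h3 : α (repf M P n) = α n := repf_apply α hP hα n
        rw [h1, h2, h3, hmX, Function.update_self]
      · have h1 : mU j = (σP j).act (X.2 j) := strat_act_heq_s5 (eU j hj) (ih2 j hj)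
        rw [h1, hmX, Function.update_of_ne hj]
    have hrs : runAux A σU s'' (n+1) = (A.tr r.1 mU, fun j => (σU j).δ (r.2 j) mU) := rfl
    have hXs : ptraj A i σP v0 α (n+1) = (A.tr X.1 mX, fun j => (σP j).δ (X.2 j) mX) := rfl
    refine ⟨?_, fun j hj => ?_, ?_⟩
    · rw [hrs, hXs]; simp only; rw [ih1, hm]
    · rw [hrs, hXs]; simp only
      rw [hm]
      exact strat_δ_heq (eU j hj) mX (ih2 j hj)
    · rw [hrs]; simp only
      have h1 : HEq ((σU i).δ (r.2 i) mU)
          (σi.δ (⟨repf M P n, repf_lt hP n⟩ : Fin (M+P)) mU) := strat_δ_heq eUi mU ih3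
      have h2 : σi.δ (⟨repf M P n, repf_lt hP n⟩ : Fin (M+P)) mU
          = (⟨repf M P (n+1), repf_lt hP (n+1)⟩ : Fin (M+P)) := by
        apply Fin.ext
        simp [hσi, repf_succ hP n]
        rfl
      exact h1.trans (heq_of_eq h2)

/-- Bound on mean payoffs: the payoff is at most the sum of absolute weights. -/
lemma pay_le_bound {N Ac St : Type} [Fintype St] (w : St → ℤ) (ρ : ℕ → St × (N → Ac)) :
    pay w ρ ≤ ∑ s : St, |(w s : ℝ)| := by
  set B : ℝ := ∑ s : St, |(w s : ℝ)| with hB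
  have hBnn : 0 ≤ B := Finset.sum_nonneg fun _ _ => abs_nonneg _
  have hwB : ∀ s : St, |(w s : ℝ)| ≤ B := fun s =>
    Finset.single_le_sum (f := fun s => |(w s : ℝ)|) (fun _ _ => abs_nonneg _)
      (Finset.mem_univ s)
  apply liminf_avg_le_of_partial_le (fun j => (w (ρ j).1 : ℝ)) (-B) B 0
  · intro n
    have := hwB (ρ n).1
    have := neg_abs_le ((w (ρ n).1 : ℝ))
    linarith
  · intro n
    have : ∀ j ∈ Finset.range n, (w (ρ j).1 : ℝ) ≤ B := by
      intro j _
      have h1 := hwB (ρ j).1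
      have h2 := le_abs_self ((w (ρ j).1 : ℝ))
      linarith
    calc (∑ j ∈ Finset.range n, (w (ρ j).1 : ℝ)) ≤ ∑ _j ∈ Finset.range n, B :=
          Finset.sum_le_sum this
    _ = n * B := by simp [mul_comm]
    _ ≤ n * B + 0 := by linarith

/-- Core construction: if the punishment value of `s''` for player `i` is below `c`, there is
a *positional* coalition strategy `p` guaranteeing mean payoff at most `c` for player `i`
along any play that, from some point where it visits `s''`, follows `p` (except for the
free actions of `i`). -/
lemma keyC {N Ac St : Type} [Fintype N] [Nonempty N] [DecidableEq N]
    [Fintype Ac] [Nonempty Ac] [Fintype St] [Nonempty St]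
    (A : Arena N Ac St) (w : N → St → ℤ) (i : N) (s'' : St) (c : ℝ)
    (hc : pun A w i s'' < c) :
    ∃ p : St → N → Ac, ∀ (t : ℕ → St) (m₀ : ℕ), t m₀ = s'' →
      (∀ k, m₀ ≤ k → ∃ a : Ac, t (k+1) = A.tr (t k) (Function.update (p (t k)) i a)) →
      Filter.liminf (fun n : ℕ => (∑ j ∈ Finset.range n, (w i (t j) : ℝ)) / (n:ℝ))
        Filter.atTop ≤ c := by
  classical
  set B : ℝ := ∑ s : St, |(w i s : ℝ)| with hBdef
  have hBnn : 0 ≤ B := Finset.sum_nonneg fun _ _ => abs_nonneg _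
  have hwB : ∀ s : St, |(w i s : ℝ)| ≤ B := fun s =>
    Finset.single_le_sum (f := fun s => |(w i s : ℝ)|) (fun _ _ => abs_nonneg _)
      (Finset.mem_univ s)
  have hDnn : 0 ≤ B + |c| := by positivity
  have hterm : ∀ s : St, (w i s : ℝ) - c ≤ B + |c| := by
    intro s
    have h1 := hwB s; have h2 := le_abs_self ((w i s : ℝ)); have h3 := neg_abs_le c
    linarith
  have htermlo : ∀ s : St, -(B + |c|) ≤ (w i s : ℝ) - c := by
    intro s
    have h1 := hwB s; have h2 := neg_abs_le ((w i s : ℝ)); have h3 := le_abs_self c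
    linarith
  -- a coalition profile with value < c
  have hne : Nonempty (∀ _ : N, Strategy N Ac) :=
    ⟨fun _ => ⟨Unit, (), fun _ _ => (), fun _ => Classical.arbitrary Ac⟩⟩
  obtain ⟨σP, hσP⟩ := exists_lt_of_ciInf_lt hc
  set v0 : St × (∀ j : N, (σP j).Q) := (s'', fun j => (σP j).q0) with hv0
  have hXsucc : ∀ (v : St × (∀ j : N, (σP j).Q)) (α : ℕ → Ac) (n : ℕ),
      ptraj A i σP v α (n+1) = pstep A i σP (ptraj A i σP v α n) (α n) := fun _ _ _ => rfl
  -- payoffs of realizable plays are < c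
  have hpayoff_le : ∀ σi : Strategy N Ac,
      pay (w i) (play A (Function.update σP i σi) s'') < c := by
    intro σi
    refine lt_of_le_of_lt ?_ hσP
    apply le_ciSup (f := fun σi : Strategy N Ac => pay (w i) (play A (Function.update σP i σi) s''))
    refine ⟨B, ?_⟩
    rintro x ⟨σi', rfl⟩
    exact pay_le_bound (w i) _
  -- payoffs of ultimately periodic deviator sequences are < c
  have hUP : ∀ (α : ℕ → Ac) (Mp P : ℕ), 0 < P → (∀ k, Mp ≤ k → α (k + P) = α k) →
      Filter.liminf (fun n : ℕ => (∑ j ∈ Finset.range n,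
        (w i (ptraj A i σP v0 α j).1 : ℝ)) / (n:ℝ)) Filter.atTop < c := by
    intro α Mp P hP hα
    obtain ⟨σi, hσi⟩ := ptraj_realize A i σP s'' α Mp P hP hα
    have h2 : pay (w i) (play A (Function.update σP i σi) s'') < c := hpayoff_le σi
    have he : (fun n : ℕ => (∑ j ∈ Finset.range n,
          (w i (play A (Function.update σP i σi) s'' j).1 : ℝ)) / (n:ℝ))
        = (fun n : ℕ => (∑ j ∈ Finset.range n,
          (w i (ptraj A i σP v0 α j).1 : ℝ)) / (n:ℝ)) := by
      funext n; congr 1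
      apply Finset.sum_congr rfl
      intro j _
      have h3 : (play A (Function.update σP i σi) s'' j).1 = (ptraj A i σP v0 α j).1 := hσi j
      rw [h3]
    unfold pay at h2
    rw [he] at h2
    exact h2
  -- cycle bound
  have hcyc : ∀ (α : ℕ → Ac) (a b : ℕ), a < b → ptraj A i σP v0 α a = ptraj A i σP v0 α b →
      (∑ k ∈ Finset.Ico a b, (w i (ptraj A i σP v0 α k).1 : ℝ)) ≤ ((b - a : ℕ) : ℝ) * c := by
    intro α a b hab hcycle
    set T' := b - a with hT'def
    have hT'pos : 0 < T' := by omega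
    set α' : ℕ → Ac := fun k => α (repf a T' k) with hα'
    have hα'per : ∀ k, a ≤ k → α' (k + T') = α' k := by
      intro k hk
      show α (repf a T' (k + T')) = α (repf a T' k)
      rw [repf_periodic hT'pos hk]
    have hagree : ∀ k, k < b → α' k = α k := by
      intro k hk
      show α (repf a T' k) = α k
      rw [repf_eq_self (by omega)]
    have hXeq : ∀ n, n ≤ b → ptraj A i σP v0 α' n = ptraj A i σP v0 α n := fun n hn =>
      ptraj_congr A i σP v0 α' α n (fun k hk => hagree k (by omega))
    have hXper : ∀ k, a ≤ k → ptraj A i σP v0 α' (k + T') = ptraj A i σP v0 α' k := by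
      intro k hk
      induction k, hk using Nat.le_induction with
      | base =>
        have h1 : a + T' = b := by omega
        rw [h1, hXeq b le_rfl, ← hcycle, ← hXeq a (by omega)]
      | succ k hk ih =>
        have h1 : k + 1 + T' = (k + T') + 1 := by omega
        rw [h1, hXsucc, hXsucc, ih, hα'per k hk]
    set u : ℕ → ℝ := fun n => (w i (ptraj A i σP v0 α' n).1 : ℝ) with hu
    have huB : ∀ n, u n ≤ B := fun n =>
      le_trans (le_abs_self _) (hwB _)
    have huper : ∀ k, a ≤ k → u (k + T') = u k := by
      intro k hk
      show (w i (ptraj A i σP v0 α' (k + T')).1 : ℝ) = _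
      rw [hXper k hk]
    have hμ := le_liminf_avg_of_periodic u B a T' hT'pos huB huper
    have hlt := hUP α' a T' hT'pos hα'per
    have hlt2 : (∑ j ∈ Finset.Ico a (a + T'), u j) / (T' : ℝ) < c := lt_of_le_of_lt hμ hlt
    have hsum : ∑ j ∈ Finset.Ico a (a + T'), u j
        = ∑ k ∈ Finset.Ico a b, (w i (ptraj A i σP v0 α k).1 : ℝ) := by
      have h1 : a + T' = b := by omega
      rw [h1]
      apply Finset.sum_congr rfl
      intro j hj
      show (w i (ptraj A i σP v0 α' j).1 : ℝ) = _
      rw [hXeq j (le_of_lt (Finset.mem_Ico.mp hj).2)]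
    have hTpos' : (0:ℝ) < (T' : ℝ) := by exact_mod_cast hT'pos
    rw [← hsum]
    have := (div_lt_iff₀ hTpos').mp hlt2
    nlinarith [this]
  -- walk bound
  set M := Fintype.card (St × (∀ j : N, (σP j).Q)) with hMdef
  have hwalk : ∀ (n : ℕ) (α : ℕ → Ac),
      (∑ k ∈ Finset.range n, ((w i (ptraj A i σP v0 α k).1 : ℝ) - c)) ≤ (M:ℝ) * (B + |c|) := by
    intro n
    induction n using Nat.strong_induction_on with
    | _ n ih =>
      intro α
      by_cases hn : n ≤ M
      · calc (∑ k ∈ Finset.range n, ((w i (ptraj A i σP v0 α k).1 : ℝ) - c))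
            ≤ ∑ _k ∈ Finset.range n, (B + |c|) :=
              Finset.sum_le_sum fun k _ => hterm _
        _ = n * (B + |c|) := by rw [Finset.sum_const, Finset.card_range, nsmul_eq_mul]
        _ ≤ M * (B + |c|) := by
            apply mul_le_mul_of_nonneg_right _ hDnn
            exact_mod_cast hn
      · push_neg at hn
        obtain ⟨x, y, hxy, hmap⟩ := Fintype.exists_ne_map_eq_of_card_lt
          (fun k : Fin (M+1) => ptraj A i σP v0 α k.1) (by simp [hMdef])
        obtain ⟨a, b, hab, hXab, hbM⟩ : ∃ a b, a < b ∧
            ptraj A i σP v0 α a = ptraj A i σP v0 α b ∧ b ≤ M := by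
          rcases lt_or_gt_of_ne (show x.1 ≠ y.1 from fun h => hxy (Fin.ext h)) with h | h
          · exact ⟨x.1, y.1, h, hmap, by omega⟩
          · exact ⟨y.1, x.1, h, hmap.symm, by omega⟩
        set T' := b - a with hT'def
        have hT'pos : 0 < T' := by omega
        set α'' : ℕ → Ac := fun k => if k < a then α k else α (k + T') with hα''
        have h1 : ∀ k, k ≤ a → ptraj A i σP v0 α'' k = ptraj A i σP v0 α k := by
          intro k hk
          apply ptraj_congr
          intro j hj
          show (if j < a then α j else α (j + T')) = α j
          rw [if_pos (by omega)]
        have h2 : ∀ k, a ≤ k → ptraj A i σP v0 α'' k = ptraj A i σP v0 α (k + T') := by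
          intro k hk
          induction k, hk using Nat.le_induction with
          | base =>
            rw [h1 a le_rfl, hXab]
            congr 1
            omega
          | succ k hk ih =>
            have he : k + 1 + T' = (k + T') + 1 := by omega
            rw [hXsucc, ih, he, hXsucc]
            congr 1
            show (if k < a then α k else α (k + T')) = α (k + T')
            rw [if_neg (by omega)]
        -- sum splice
        set g : ℕ → ℝ := fun k => (w i (ptraj A i σP v0 α k).1 : ℝ) - c with hg
        set g'' : ℕ → ℝ := fun k => (w i (ptraj A i σP v0 α'' k).1 : ℝ) - c with hg''
        have ha_le : a ≤ n - T' := by omega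
        have hb_le : b ≤ n := by omega
        have e1 : ∀ k, k < a → g'' k = g k := by
          intro k hk
          show (w i (ptraj A i σP v0 α'' k).1 : ℝ) - c = (w i (ptraj A i σP v0 α k).1 : ℝ) - c
          rw [h1 k hk.le]
        have e2 : ∀ k, a ≤ k → g'' k = g (k + T') := by
          intro k hk
          show (w i (ptraj A i σP v0 α'' k).1 : ℝ) - c = (w i (ptraj A i σP v0 α (k + T')).1 : ℝ) - c
          rw [h2 k hk]
        have hsplice : (∑ k ∈ Finset.range (n - T'), g'' k)
            = (∑ k ∈ Finset.range n, g k) - (∑ k ∈ Finset.Ico a b, g k) := by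
          have s1 : (∑ k ∈ Finset.range (n - T'), g'' k)
              = (∑ k ∈ Finset.Ico 0 a, g'' k) + (∑ k ∈ Finset.Ico a (n - T'), g'' k) := by
            rw [Finset.range_eq_Ico, ← Finset.sum_Ico_consecutive _ (Nat.zero_le a) ha_le]
          have s2 : (∑ k ∈ Finset.Ico 0 a, g'' k) = (∑ k ∈ Finset.Ico 0 a, g k) :=
            Finset.sum_congr rfl fun k hk => e1 k (Finset.mem_Ico.mp hk).2
          have s3 : (∑ k ∈ Finset.Ico a (n - T'), g'' k) = (∑ k ∈ Finset.Ico b n, g k) := by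
            have s3a : (∑ k ∈ Finset.Ico a (n - T'), g'' k)
                = ∑ k ∈ Finset.range (n - T' - a), g'' (a + k) := Finset.sum_Ico_eq_sum_range _ _ _
            have s3b : (∑ k ∈ Finset.Ico b n, g k)
                = ∑ k ∈ Finset.range (n - b), g (b + k) := Finset.sum_Ico_eq_sum_range _ _ _
            rw [s3a, s3b]
            have hcards : n - T' - a = n - b := by omega
            rw [hcards]
            apply Finset.sum_congr rfl
            intro k _
            rw [e2 (a + k) (by omega)]
            congr 1
            omega
          have s4 : (∑ k ∈ Finset.range n, g k)
              = (∑ k ∈ Finset.Ico 0 a, g k) + (∑ k ∈ Finset.Ico a b, g k)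
                + (∑ k ∈ Finset.Ico b n, g k) := by
            rw [Finset.range_eq_Ico,
              ← Finset.sum_Ico_consecutive _ (Nat.zero_le b) hb_le,
              ← Finset.sum_Ico_consecutive _ (Nat.zero_le a) hab.le]
          rw [s1, s2, s3, s4]; ring
        have hIco : (∑ k ∈ Finset.Ico a b, g k) ≥ 0 → True := fun _ => trivial
        have hIco2 : (∑ k ∈ Finset.Ico a b, g k) ≤ 0 := by
          have hc1 := hcyc α a b hab hXab
          have hc2 : (∑ k ∈ Finset.Ico a b, g k)
              = (∑ k ∈ Finset.Ico a b, (w i (ptraj A i σP v0 α k).1 : ℝ))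
                - ((b - a : ℕ) : ℝ) * c := by
            rw [hg]
            rw [Finset.sum_sub_distrib]
            congr 1
            rw [Finset.sum_const, Nat.card_Ico]
            simp [mul_comm]
          rw [hc2]
          linarith
        have hih := ih (n - T') (by omega) α''
        linarith
  -- reachable set, potential
  set Reach : Set (St × (∀ j : N, (σP j).Q)) := {v | ∃ α n, ptraj A i σP v0 α n = v} with hRdef
  set WS : (St × (∀ j : N, (σP j).Q)) → Set ℝ := fun v =>
    {x | ∃ (α : ℕ → Ac) (n : ℕ), x = ∑ k ∈ Finset.range n,
      ((w i (ptraj A i σP v α k).1 : ℝ) - c)} with hWSdef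
  have aAc : Ac := Classical.arbitrary Ac
  have hWSmem0 : ∀ v, (0:ℝ) ∈ WS v := fun v => ⟨fun _ => aAc, 0, by simp⟩
  have hWSne : ∀ v, (WS v).Nonempty := fun v => ⟨0, hWSmem0 v⟩
  -- trajectories from reachable points embed into trajectories from v0
  have hconcat : ∀ (α₀ : ℕ → Ac) (m : ℕ) (α : ℕ → Ac) (k : ℕ),
      ptraj A i σP (ptraj A i σP v0 α₀ m) α k
        = ptraj A i σP v0 (fun j => if j < m then α₀ j else α (j - m)) (m + k) := by
    intro α₀ m α
    set αc : ℕ → Ac := fun j => if j < m then α₀ j else α (j - m) with hαc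
    intro k
    induction k with
    | zero =>
      show ptraj A i σP v0 α₀ m = ptraj A i σP v0 αc m
      apply ptraj_congr
      intro j hj
      show α₀ j = (if j < m then α₀ j else α (j - m))
      rw [if_pos hj]
    | succ k ih =>
      have he : m + (k + 1) = (m + k) + 1 := by omega
      rw [hXsucc, ih, he, hXsucc]
      congr 1
      show α k = (if m + k < m then α₀ (m + k) else α (m + k - m))
      rw [if_neg (by omega)]
      congr 1
      omega
  have hWSbdd : ∀ v, v ∈ Reach → BddAbove (WS v) := by
    rintro v ⟨α₀, m, rfl⟩
    refine ⟨(M:ℝ) * (B + |c|) + m * (B + |c|), ?_⟩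
    rintro x ⟨α, n, rfl⟩
    set αc : ℕ → Ac := fun j => if j < m then α₀ j else α (j - m) with hαc
    have h1 : ∀ k, ptraj A i σP (ptraj A i σP v0 α₀ m) α k = ptraj A i σP v0 αc (m + k) :=
      hconcat α₀ m α
    have h2 := hwalk (m + n) αc
    have h3 : (∑ k ∈ Finset.range (m + n), ((w i (ptraj A i σP v0 αc k).1 : ℝ) - c))
        = (∑ k ∈ Finset.range m, ((w i (ptraj A i σP v0 αc k).1 : ℝ) - c))
          + ∑ k ∈ Finset.range n, ((w i (ptraj A i σP v0 αc (m + k)).1 : ℝ) - c) :=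
      Finset.sum_range_add _ m n
    have h4 : (∑ k ∈ Finset.range n, ((w i (ptraj A i σP (ptraj A i σP v0 α₀ m) α k).1 : ℝ) - c))
        = ∑ k ∈ Finset.range n, ((w i (ptraj A i σP v0 αc (m + k)).1 : ℝ) - c) := by
      apply Finset.sum_congr rfl
      intro k _
      rw [h1 k]
    have h5 : -(∑ k ∈ Finset.range m, ((w i (ptraj A i σP v0 αc k).1 : ℝ) - c))
        ≤ m * (B + |c|) := by
      have : ∀ k ∈ Finset.range m, -(B + |c|) ≤ (w i (ptraj A i σP v0 αc k).1 : ℝ) - c :=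
        fun k _ => htermlo _
      have hs := Finset.sum_le_sum this
      simp only [Finset.sum_const, Finset.card_range, nsmul_eq_mul] at hs
      linarith
    rw [h4]
    linarith
  have hφ0 : ∀ v ∈ Reach, (0:ℝ) ≤ sSup (WS v) := fun v hv =>
    le_csSup (hWSbdd v hv) (hWSmem0 v)
  have hReach0 : v0 ∈ Reach := ⟨fun _ => aAc, 0, rfl⟩
  have hReachStep : ∀ v ∈ Reach, ∀ a : Ac, pstep A i σP v a ∈ Reach := by
    rintro v ⟨α₀, m, rfl⟩ a
    refine ⟨fun j => if j = m then a else α₀ j, m + 1, ?_⟩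
    rw [hXsucc]
    have h1 : ptraj A i σP v0 (fun j => if j = m then a else α₀ j) m
        = ptraj A i σP v0 α₀ m := by
      apply ptraj_congr
      intro j hj
      show (if j = m then a else α₀ j) = α₀ j
      rw [if_neg (by omega)]
    rw [h1]
    congr 1
    show (if m = m then a else α₀ m) = a
    rw [if_pos rfl]
  have hφstep : ∀ v ∈ Reach, ∀ a : Ac,
      sSup (WS (pstep A i σP v a)) ≤ sSup (WS v) - ((w i v.1 : ℝ) - c) := by
    intro v hv a
    apply csSup_le (hWSne _)
    rintro x ⟨α, n, rfl⟩
    set αp : ℕ → Ac := fun j => if j = 0 then a else α (j - 1) with hαp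
    have h1 : ∀ k, ptraj A i σP v αp (k + 1) = ptraj A i σP (pstep A i σP v a) α k := by
      intro k
      induction k with
      | zero =>
        rw [hXsucc]
        show pstep A i σP v (αp 0) = pstep A i σP v a
        congr 1
      | succ k ih =>
        have hkk : αp (k + 1) = α k := by
          show (if k + 1 = 0 then a else α (k + 1 - 1)) = α k
          simp
        rw [hXsucc, ih, hXsucc, hkk]
    have h2 : ((w i v.1 : ℝ) - c)
          + (∑ k ∈ Finset.range n, ((w i (ptraj A i σP (pstep A i σP v a) α k).1 : ℝ) - c))
        = ∑ k ∈ Finset.range (n + 1), ((w i (ptraj A i σP v αp k).1 : ℝ) - c) := by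
      rw [Finset.sum_range_succ']
      have h2a : ∀ k ∈ Finset.range n,
          ((w i (ptraj A i σP v αp (k + 1)).1 : ℝ) - c)
            = ((w i (ptraj A i σP (pstep A i σP v a) α k).1 : ℝ) - c) := by
        intro k _
        rw [h1 k]
      rw [Finset.sum_congr rfl h2a]
      have h2b : ptraj A i σP v αp 0 = v := rfl
      rw [h2b]
      ring
    have h3 : (∑ k ∈ Finset.range (n + 1), ((w i (ptraj A i σP v αp k).1 : ℝ) - c))
        ≤ sSup (WS v) := le_csSup (hWSbdd v hv) ⟨αp, n + 1, rfl⟩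
    linarith
  -- positional strategy via minimizing the potential over reachable memories
  have hminex : ∀ s : St, (∃ q, (s, q) ∈ Reach) → ∃ q, (s, q) ∈ Reach ∧
      ∀ q', (s, q') ∈ Reach → sSup (WS (s, q)) ≤ sSup (WS (s, q')) := by
    intro s hs
    obtain ⟨q, hq, hqm⟩ := Set.exists_min_image {q | (s, q) ∈ Reach}
      (fun q => sSup (WS (s, q))) (Set.toFinite _) hs
    exact ⟨q, hq, hqm⟩
  choose qmin hqmin1 hqmin2 using hminex
  set p : St → N → Ac := fun s =>
    if hs : ∃ q, (s, q) ∈ Reach then (fun j => (σP j).act (qmin s hs j)) else fun _ => aAc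
    with hp
  set ψ : St → ℝ := fun s =>
    if hs : ∃ q, (s, q) ∈ Reach then sSup (WS (s, qmin s hs)) else 0 with hψ
  have hψ0 : ∀ s, 0 ≤ ψ s := by
    intro s
    show 0 ≤ (if hs : ∃ q, (s, q) ∈ Reach then sSup (WS (s, qmin s hs)) else 0)
    split
    · next hs => exact hφ0 _ (hqmin1 s hs)
    · exact le_refl 0
  have hstep : ∀ (s : St) (hs : ∃ q, (s, q) ∈ Reach) (a : Ac),
      (∃ q, (A.tr s (Function.update (p s) i a), q) ∈ Reach) ∧
      ψ (A.tr s (Function.update (p s) i a)) ≤ ψ s - ((w i s : ℝ) - c) := by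
    intro s hs a
    have hv : (s, qmin s hs) ∈ Reach := hqmin1 s hs
    have hps : p s = fun j => (σP j).act (qmin s hs j) := by
      rw [hp]; simp only [dif_pos hs]
    have h1 : (pstep A i σP (s, qmin s hs) a).1 = A.tr s (Function.update (p s) i a) := by
      rw [hps]; rfl
    have hmem : pstep A i σP (s, qmin s hs) a ∈ Reach := hReachStep _ hv a
    have hpair : (A.tr s (Function.update (p s) i a), (pstep A i σP (s, qmin s hs) a).2)
        = pstep A i σP (s, qmin s hs) a := by
      rw [← h1]
    have hgood' : ∃ q, (A.tr s (Function.update (p s) i a), q) ∈ Reach :=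
      ⟨(pstep A i σP (s, qmin s hs) a).2, by rw [hpair]; exact hmem⟩
    refine ⟨hgood', ?_⟩
    have hψs : ψ s = sSup (WS (s, qmin s hs)) := by
      rw [hψ]; simp only [dif_pos hs]
    have hψs' : ψ (A.tr s (Function.update (p s) i a))
        = sSup (WS (A.tr s (Function.update (p s) i a),
            qmin (A.tr s (Function.update (p s) i a)) hgood')) := by
      rw [hψ]; simp only [dif_pos hgood']
    rw [hψs, hψs']
    have hmono : sSup (WS (A.tr s (Function.update (p s) i a),
          qmin (A.tr s (Function.update (p s) i a)) hgood'))
        ≤ sSup (WS (pstep A i σP (s, qmin s hs) a)) := by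
      have := hqmin2 (A.tr s (Function.update (p s) i a)) hgood'
        (pstep A i σP (s, qmin s hs) a).2 (by rw [hpair]; exact hmem)
      rw [hpair] at this
      exact this
    have hdec := hφstep (s, qmin s hs) hv a
    calc sSup (WS (A.tr s (Function.update (p s) i a),
          qmin (A.tr s (Function.update (p s) i a)) hgood'))
        ≤ sSup (WS (pstep A i σP (s, qmin s hs) a)) := hmono
    _ ≤ sSup (WS (s, qmin s hs)) - ((w i s : ℝ) - c) := hdec
  -- conclusion
  refine ⟨p, ?_⟩
  intro t m₀ ht0 hsteps
  have hgood0 : ∃ q, (s'', q) ∈ Reach := ⟨v0.2, hReach0⟩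
  have hinv : ∀ n, m₀ ≤ n → (∃ q, (t n, q) ∈ Reach) ∧
      (∑ k ∈ Finset.Ico m₀ n, ((w i (t k) : ℝ) - c)) ≤ ψ (t m₀) - ψ (t n) := by
    intro n hn
    induction n, hn using Nat.le_induction with
    | base =>
      refine ⟨by rw [ht0]; exact hgood0, by simp⟩
    | succ n hn ih =>
      obtain ⟨hg, hsum⟩ := ih
      obtain ⟨a, ha⟩ := hsteps n hn
      obtain ⟨hg', hψ'⟩ := hstep (t n) hg a
      rw [← ha] at hg' hψ'
      refine ⟨hg', ?_⟩
      rw [Finset.sum_Ico_succ_top hn]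
      linarith
  set C : ℝ := ψ (t m₀) + (m₀ : ℝ) * (B + |c|) with hC
  have hpart : ∀ n : ℕ, (∑ j ∈ Finset.range n, (w i (t j) : ℝ)) ≤ n * c + C := by
    intro n
    have hkey : (∑ j ∈ Finset.range n, ((w i (t j) : ℝ) - c)) ≤ C := by
      by_cases hn : m₀ ≤ n
      · have h1 := (hinv n hn).2
        have h2 : 0 ≤ ψ (t n) := hψ0 _
        have h3 : (∑ j ∈ Finset.range n, ((w i (t j) : ℝ) - c))
            = (∑ j ∈ Finset.Ico 0 m₀, ((w i (t j) : ℝ) - c))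
              + (∑ j ∈ Finset.Ico m₀ n, ((w i (t j) : ℝ) - c)) := by
          rw [Finset.range_eq_Ico, ← Finset.sum_Ico_consecutive _ (Nat.zero_le m₀) hn]
        have h4 : (∑ j ∈ Finset.Ico 0 m₀, ((w i (t j) : ℝ) - c)) ≤ m₀ * (B + |c|) := by
          calc (∑ j ∈ Finset.Ico 0 m₀, ((w i (t j) : ℝ) - c))
              ≤ ∑ _j ∈ Finset.Ico 0 m₀, (B + |c|) := Finset.sum_le_sum fun j _ => hterm _
          _ = m₀ * (B + |c|) := by
                rw [Finset.sum_const, Nat.card_Ico, nsmul_eq_mul]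
                norm_num
        rw [hC, h3]
        linarith
      · push_neg at hn
        have h4 : (∑ j ∈ Finset.range n, ((w i (t j) : ℝ) - c)) ≤ n * (B + |c|) := by
          calc (∑ j ∈ Finset.range n, ((w i (t j) : ℝ) - c))
              ≤ ∑ _j ∈ Finset.range n, (B + |c|) := Finset.sum_le_sum fun j _ => hterm _
          _ = n * (B + |c|) := by rw [Finset.sum_const, Finset.card_range, nsmul_eq_mul]
        have h5 : (n : ℝ) * (B + |c|) ≤ (m₀ : ℝ) * (B + |c|) := by
          apply mul_le_mul_of_nonneg_right _ hDnn
          exact_mod_cast hn.le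
        have h6 : 0 ≤ ψ (t m₀) := hψ0 _
        rw [hC]
        linarith
    have h7 : (∑ j ∈ Finset.range n, ((w i (t j) : ℝ) - c))
        = (∑ j ∈ Finset.range n, (w i (t j) : ℝ)) - n * c := by
      rw [Finset.sum_sub_distrib]
      simp [mul_comm]
    linarith [hkey, h7.symm.le, h7.le]
  exact liminf_avg_le_of_partial_le (fun j => (w i (t j) : ℝ)) (-B) c C
    (fun n => by
      have h1 := hwB (t n)
      have h2 := neg_abs_le ((w i (t n) : ℝ))
      linarith)
    hpart
/-- Optimal positional punishment: a positional coalition strategy guaranteeing player `i`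
at most the punishment value `pun A w i s''`. -/
lemma key {N Ac St : Type} [Fintype N] [Nonempty N] [DecidableEq N]
    [Fintype Ac] [Nonempty Ac] [Fintype St] [Nonempty St]
    (A : Arena N Ac St) (w : N → St → ℤ) (i : N) (s'' : St) :
    ∃ p : St → N → Ac, ∀ (t : ℕ → St) (m₀ : ℕ), t m₀ = s'' →
      (∀ k, m₀ ≤ k → ∃ a : Ac, t (k+1) = A.tr (t k) (Function.update (p (t k)) i a)) →
      Filter.liminf (fun n : ℕ => (∑ j ∈ Finset.range n, (w i (t j) : ℝ)) / (n:ℝ))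
        Filter.atTop ≤ pun A w i s'' := by
  classical
  have hch : ∀ n : ℕ, ∃ p : St → N → Ac, ∀ (t : ℕ → St) (m₀ : ℕ), t m₀ = s'' →
      (∀ k, m₀ ≤ k → ∃ a : Ac, t (k+1) = A.tr (t k) (Function.update (p (t k)) i a)) →
      Filter.liminf (fun n : ℕ => (∑ j ∈ Finset.range n, (w i (t j) : ℝ)) / (n:ℝ))
        Filter.atTop ≤ pun A w i s'' + 1 / ((n : ℝ) + 1) := by
    intro n
    apply keyC
    have : (0:ℝ) < 1 / ((n:ℝ) + 1) := by positivity
    linarith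
  choose f hf using hch
  obtain ⟨p, hp⟩ := Finite.exists_infinite_fiber f
  refine ⟨p, ?_⟩
  intro t m₀ h1 h2
  apply le_of_forall_pos_le_add
  intro ε hε
  obtain ⟨n₁, hn₁⟩ := exists_nat_one_div_lt hε
  have hinf : (f ⁻¹' {p}).Infinite := Set.infinite_coe_iff.mp hp
  obtain ⟨n, hn_mem, hn_gt⟩ := hinf.exists_gt n₁
  have hfn : f n = p := hn_mem
  have h3 := hf n t m₀ h1 (by rw [hfn]; exact h2)
  have h4 : 1 / ((n:ℝ) + 1) ≤ 1 / ((n₁:ℝ) + 1) := by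
    apply one_div_le_one_div_of_le
    · positivity
    · have : (n₁ : ℝ) ≤ n := by exact_mod_cast hn_gt.le
      linarith
  linarith
/-- **(2) ⟹ (1) of the Nash characterisation.**
For every mean-payoff game and every ultimately periodic path `π`, if there is a vector
`z` with `z i ∈ pun_i(G)` for every player `i` such that, for every player `i`, every
configuration of `π` is `z i`-secure for `i` and `z i ≤ pay_i(π)`, then some Nash
equilibrium `σ` from the initial state of `π` induces `π`. -/
theorem secure_values_implies_nash {N Ac St : Type}
    [Fintype N] [Nonempty N] [DecidableEq N]
    [Fintype Ac] [Nonempty Ac] [Fintype St] [Nonempty St]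
    (A : Arena N Ac St) (w : N → St → ℤ)
    (π : ℕ → St × (N → Ac)) (hπ : IsPath A π) (hup : UltimatelyPeriodic π)
    (h : ∃ z : N → ℝ, ∀ i : N,
        z i ∈ Set.range (pun A w i) ∧
        (∀ k : ℕ, ZSecure A w i (z i) (π k)) ∧
        z i ≤ pay (w i) π) :
    ∃ σ : ∀ _ : N, Strategy N Ac,
        NashFrom A w σ (π 0).1 ∧ play A σ (π 0).1 = π := by
  classical
  obtain ⟨z, hz⟩ := h
  obtain ⟨K, T, hT, hper⟩ := hup
  choose punish hpunish using (fun (i : N) (s'' : St) => key A w i s'')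
  -- the equilibrium transducers
  set dstep : (Fin (K + T) ⊕ N × St × St) → (N → Ac) → (Fin (K + T) ⊕ N × St × St) :=
    fun q a =>
      match q with
      | Sum.inl k => if h : a = (π k.1).2 then Sum.inl ⟨nxtf K T k.1, nxtf_lt hT k.1⟩
          else Sum.inr (Classical.choose (Function.ne_iff.mp h),
            A.tr (π k.1).1 a, A.tr (π k.1).1 a)
      | Sum.inr m => Sum.inr (m.1, m.2.1, A.tr m.2.2 a)
    with hdstepdef
  set σstar : ∀ _ : N, Strategy N Ac := fun j =>
    ⟨Fin (K + T) ⊕ N × St × St, Sum.inl ⟨0, by omega⟩, dstep,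
      fun q => match q with
        | Sum.inl k => (π k.1).2 j
        | Sum.inr m => punish m.1 m.2.1 m.2.2 j⟩
    with hσstar
  -- computation rules
  have hdstep_inl : ∀ (k : Fin (K+T)) (a : N → Ac), dstep (Sum.inl k) a
      = if h : a = (π k.1).2 then Sum.inl ⟨nxtf K T k.1, nxtf_lt hT k.1⟩
        else Sum.inr (Classical.choose (Function.ne_iff.mp h),
          A.tr (π k.1).1 a, A.tr (π k.1).1 a) := fun _ _ => rfl
  have hdstep_inr : ∀ (m : N × St × St) (a : N → Ac),
      dstep (Sum.inr m) a = Sum.inr (m.1, m.2.1, A.tr m.2.2 a) := fun _ _ => rfl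
  have hdact_inl : ∀ (j : N) (k : Fin (K+T)),
      (σstar j).act (Sum.inl k) = (π k.1).2 j := fun _ _ => rfl
  have hdact_inr : ∀ (j : N) (m : N × St × St),
      (σstar j).act (Sum.inr m) = punish m.1 m.2.1 m.2.2 j := fun _ _ => rfl
  have hδstar : ∀ (j : N) (q : Fin (K+T) ⊕ N × St × St) (a : N → Ac),
      (σstar j).δ q a = dstep q a := fun _ _ _ => rfl
  -- the equilibrium run follows π
  have hrunstar : ∀ n, runAux A σstar (π 0).1 n
      = ((π n).1, fun _ => Sum.inl ⟨repf K T n, repf_lt hT n⟩) := by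
    intro n
    induction n with
    | zero =>
      have h0 : (⟨repf K T 0, repf_lt hT 0⟩ : Fin (K+T)) = ⟨0, by omega⟩ :=
        Fin.ext (repf_eq_self (by omega))
      rw [h0]
      rfl
    | succ n ih =>
      have hstep : runAux A σstar (π 0).1 (n+1)
          = (A.tr (runAux A σstar (π 0).1 n).1
              (fun j => (σstar j).act ((runAux A σstar (π 0).1 n).2 j)),
             fun j => (σstar j).δ ((runAux A σstar (π 0).1 n).2 j)
               (fun j' => (σstar j').act ((runAux A σstar (π 0).1 n).2 j'))) := rfl
      rw [hstep, ih]
      have hact2 : (fun j : N => (σstar j).act (Sum.inl ⟨repf K T n, repf_lt hT n⟩)) = (π n).2 := by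
        funext j
        rw [hdact_inl]
        show (π (repf K T n)).2 j = (π n).2 j
        rw [repf_apply π hT hper n]
      have hcond : (π n).2 = (π (⟨repf K T n, repf_lt hT n⟩ : Fin (K+T)).1).2 := by
        show _ = (π (repf K T n)).2
        rw [repf_apply π hT hper n]
      refine congrArg₂ Prod.mk ?_ ?_
      · show A.tr (π n).1
            (fun j => (σstar j).act (Sum.inl ⟨repf K T n, repf_lt hT n⟩)) = (π (n+1)).1
        rw [hact2]
        exact hπ n
      · funext j
        show (σstar j).δ (Sum.inl ⟨repf K T n, repf_lt hT n⟩)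
            (fun j' => (σstar j').act (Sum.inl ⟨repf K T n, repf_lt hT n⟩))
          = Sum.inl ⟨repf K T (n+1), repf_lt hT (n+1)⟩
        rw [hact2, hδstar, hdstep_inl, dif_pos hcond]
        exact congrArg Sum.inl (Fin.ext (repf_succ hT n).symm)
  have hplaystar : play A σstar (π 0).1 = π := by
    funext n
    show ((runAux A σstar (π 0).1 n).1,
        fun j => (σstar j).act ((runAux A σstar (π 0).1 n).2 j)) = π n
    rw [hrunstar n]
    refine congrArg₂ Prod.mk rfl ?_
    funext j
    show (σstar j).act (Sum.inl ⟨repf K T n, repf_lt hT n⟩) = (π n).2 j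
    rw [hdact_inl]
    show (π (repf K T n)).2 j = (π n).2 j
    rw [repf_apply π hT hper n]
  refine ⟨σstar, ?_, hplaystar⟩
  -- Nash equilibrium property
  intro i σ'
  rw [hplaystar]
  obtain ⟨hzrange, hzsec, hzpay⟩ := hz i
  set σU := Function.update σstar i σ' with hσU
  have eU : ∀ j, j ≠ i → σU j = σstar j := fun j hj => Function.update_of_ne hj _ _
  set r : ℕ → St × (∀ j : N, (σU j).Q) := runAux A σU (π 0).1 with hr
  set β : ℕ → Ac := fun n => (σU i).act ((r n).2 i) with hβ
  -- invariant before any deviation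
  have hInv : ∀ n, (∀ m, m < n → β m = (π m).2 i) →
      (r n).1 = (π n).1 ∧ ∀ j, j ≠ i → HEq ((r n).2 j)
        (Sum.inl ⟨repf K T n, repf_lt hT n⟩ : Fin (K+T) ⊕ N × St × St) := by
    intro n
    induction n with
    | zero =>
      intro _
      refine ⟨rfl, fun j hj => ?_⟩
      have h0 : (Sum.inl ⟨repf K T 0, repf_lt hT 0⟩ : Fin (K+T) ⊕ N × St × St)
          = (σstar j).q0 := by
        show _ = Sum.inl (⟨0, by omega⟩ : Fin (K+T))
        exact congrArg Sum.inl (Fin.ext (repf_eq_self (by omega)))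
      rw [h0]
      exact strat_q0_heq_s5 (eU j hj)
    | succ n ih =>
      intro hm
      obtain ⟨ih1, ih2⟩ := ih (fun m hmn => hm m (by omega))
      have hactU : (fun j => (σU j).act ((r n).2 j)) = (π n).2 := by
        funext j
        by_cases hj : j = i
        · subst hj; exact hm n (by omega)
        · have h1 : (σU j).act ((r n).2 j)
              = (σstar j).act (Sum.inl ⟨repf K T n, repf_lt hT n⟩) :=
            strat_act_heq_s5 (eU j hj) (ih2 j hj)
          rw [h1, hdact_inl]
          show (π (repf K T n)).2 j = (π n).2 j
          rw [repf_apply π hT hper n]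
      constructor
      · show A.tr (r n).1 (fun j => (σU j).act ((r n).2 j)) = (π (n+1)).1
        rw [hactU, ih1]
        exact hπ n
      · intro j hj
        show HEq ((σU j).δ ((r n).2 j) (fun j' => (σU j').act ((r n).2 j'))) _
        rw [hactU]
        refine HEq.trans (strat_δ_heq (eU j hj) ((π n).2) (ih2 j hj)) (heq_of_eq ?_)
        rw [hδstar, hdstep_inl]
        have hcond : (π n).2 = (π (⟨repf K T n, repf_lt hT n⟩ : Fin (K+T)).1).2 := by
          show _ = (π (repf K T n)).2
          rw [repf_apply π hT hper n]
        rw [dif_pos hcond]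
        exact congrArg Sum.inl (Fin.ext (repf_succ hT n).symm)
  by_cases hA : ∀ n, β n = (π n).2 i
  · -- no deviation: the play follows π
    have hst : ∀ n, (r n).1 = (π n).1 := fun n => (hInv n (fun m _ => hA m)).1
    have heq : pay (w i) (play A σU (π 0).1) = pay (w i) π := by
      unfold pay
      congr 1
      funext n
      congr 1
      apply Finset.sum_congr rfl
      intro j _
      have h1 : (play A σU (π 0).1 j).1 = (r j).1 := rfl
      rw [h1, hst j]
    rw [heq]
  · -- first deviation at n₀, then punishment
    push_neg at hA
    set n₀ := Nat.find hA with hn₀def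
    have hspec : β n₀ ≠ (π n₀).2 i := Nat.find_spec hA
    have hminn : ∀ m, m < n₀ → β m = (π m).2 i := fun m hm =>
      not_not.mp (Nat.find_min hA hm)
    obtain ⟨hI1, hI2⟩ := hInv n₀ hminn
    set aDev : N → Ac := Function.update ((π n₀).2) i (β n₀) with haDev
    have hactU : (fun j => (σU j).act ((r n₀).2 j)) = aDev := by
      funext j
      by_cases hj : j = i
      · subst hj
        rw [haDev, Function.update_self]
      · have h1 : (σU j).act ((r n₀).2 j)
            = (σstar j).act (Sum.inl ⟨repf K T n₀, repf_lt hT n₀⟩) :=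
          strat_act_heq_s5 (eU j hj) (hI2 j hj)
        rw [h1, hdact_inl, haDev, Function.update_of_ne hj]
        show (π (repf K T n₀)).2 j = (π n₀).2 j
        rw [repf_apply π hT hper n₀]
    set s2 := A.tr (π n₀).1 aDev with hs2
    have hpunz : pun A w i s2 ≤ z i := hzsec n₀ (β n₀)
    have hcondneg : ¬ (aDev = (π (⟨repf K T n₀, repf_lt hT n₀⟩ : Fin (K+T)).1).2) := by
      show ¬ (aDev = (π (repf K T n₀)).2)
      rw [repf_apply π hT hper n₀]
      intro hcon
      apply hspec
      have h2 : aDev i = (π n₀).2 i := by rw [hcon]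
      rw [haDev, Function.update_self] at h2
      exact h2
    have hstate1 : (r (n₀+1)).1 = s2 := by
      show A.tr (r n₀).1 (fun j => (σU j).act ((r n₀).2 j)) = s2
      rw [hactU, hI1]
    have hmem1 : ∀ j, j ≠ i → HEq ((r (n₀+1)).2 j)
        (Sum.inr (i, s2, s2) : Fin (K+T) ⊕ N × St × St) := by
      intro j hj
      show HEq ((σU j).δ ((r n₀).2 j) (fun j' => (σU j').act ((r n₀).2 j'))) _
      rw [hactU]
      refine HEq.trans (strat_δ_heq (eU j hj) aDev (hI2 j hj)) (heq_of_eq ?_)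
      rw [hδstar, hdstep_inl, dif_neg hcondneg]
      have hdev : Classical.choose (Function.ne_iff.mp hcondneg) = i := by
        have hsp := Classical.choose_spec (Function.ne_iff.mp hcondneg)
        set dv := Classical.choose (Function.ne_iff.mp hcondneg) with hdv
        by_contra hne'
        apply hsp
        show aDev dv = (π (repf K T n₀)).2 dv
        have hu1 : aDev dv = (π n₀).2 dv := Function.update_of_ne hne' _ _
        have hu2 : (π (repf K T n₀)).2 dv = (π n₀).2 dv := by
          rw [repf_apply π hT hper n₀]
        rw [hu1, hu2]
      have h1 : A.tr (π (⟨repf K T n₀, repf_lt hT n₀⟩ : Fin (K+T)).1).1 aDev = s2 := by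
        show A.tr (π (repf K T n₀)).1 aDev = s2
        rw [repf_apply π hT hper n₀]
      rw [hdev, h1]
    have hpunInv : ∀ n, n₀ + 1 ≤ n → ∀ j, j ≠ i → HEq ((r n).2 j)
        (Sum.inr (i, s2, (r n).1) : Fin (K+T) ⊕ N × St × St) := by
      intro n hn
      induction n, hn using Nat.le_induction with
      | base =>
        intro j hj
        rw [hstate1]
        exact hmem1 j hj
      | succ n hn ih =>
        intro j hj
        have hactP : (fun j' => (σU j').act ((r n).2 j'))
            = Function.update (punish i s2 ((r n).1)) i (β n) := by
          funext j'
          by_cases hj' : j' = i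
          · subst hj'; rw [Function.update_self]
          · rw [Function.update_of_ne hj']
            have h1 : (σU j').act ((r n).2 j')
                = (σstar j').act (Sum.inr (i, s2, (r n).1)) :=
              strat_act_heq_s5 (eU j' hj') (ih j' hj')
            rw [h1, hdact_inr]
        show HEq ((σU j).δ ((r n).2 j) (fun j' => (σU j').act ((r n).2 j'))) _
        refine HEq.trans (strat_δ_heq (eU j hj) _ (ih j hj)) (heq_of_eq ?_)
        rw [hδstar, hdstep_inr]
        have h1 : (r (n+1)).1 = A.tr (r n).1 (fun j' => (σU j').act ((r n).2 j')) := rfl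
        rw [h1]
    have hsteps : ∀ k, n₀ + 1 ≤ k → ∃ a : Ac,
        (r (k+1)).1 = A.tr ((r k).1) (Function.update (punish i s2 ((r k).1)) i a) := by
      intro k hk
      refine ⟨β k, ?_⟩
      have hactP : (fun j' => (σU j').act ((r k).2 j'))
          = Function.update (punish i s2 ((r k).1)) i (β k) := by
        funext j'
        by_cases hj' : j' = i
        · subst hj'; rw [Function.update_self]
        · rw [Function.update_of_ne hj']
          have h1 : (σU j').act ((r k).2 j')
              = (σstar j').act (Sum.inr (i, s2, (r k).1)) :=
            strat_act_heq_s5 (eU j' hj') (hpunInv k hk j' hj')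
          rw [h1, hdact_inr]
      show A.tr (r k).1 (fun j' => (σU j').act ((r k).2 j')) = _
      rw [hactP]
    have hguar := hpunish i s2 (fun n => (r n).1) (n₀ + 1) hstate1 hsteps
    have hppay : pay (w i) (play A σU (π 0).1)
        = Filter.liminf (fun n : ℕ =>
            (∑ j ∈ Finset.range n, (w i ((r j).1) : ℝ)) / (n:ℝ)) Filter.atTop := rfl
    rw [hppay]
    calc Filter.liminf (fun n : ℕ =>
            (∑ j ∈ Finset.range n, (w i ((r j).1) : ℝ)) / (n:ℝ)) Filter.atTop
        ≤ pun A w i s2 := hguar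
    _ ≤ z i := hpunz
    _ ≤ pay (w i) π := hzpay
end

section
/- Let G be a mean-payoff game with players N and weight functions (w_i)_{i∈N}, and define the summed weight function w : St → ℤ by w(s) = ∑_{i∈N} w_i(s). Then for every strategy profile σ of finite-state strategies and every state s, the mean-payoff of the induced path π(σ, s) with respect to w equals ∑_{i∈N} pay_i(π(σ, s)); in particular, a dummy player whose weight function is w receives as payoff exactly the utilitarian social welfare usw(σ) = ∑_{i∈N} pay_i(π(σ, s)). -/

lemma iterate_ev_periodic {X : Type} [Fintype X] (f : X → X) (x : X) :
    ∃ K T : ℕ, 0 < T ∧ ∀ k, K ≤ k → f^[k + T] x = f^[k] x := by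
  obtain ⟨m, n, hmn, heq⟩ := Finite.exists_ne_map_eq_of_infinite (fun k : ℕ => f^[k] x)
  rcases lt_or_gt_of_ne hmn with h | h
  · refine ⟨m, n - m, by omega, fun k hk => ?_⟩
    have : k + (n - m) = (k - m) + n := by omega
    rw [this, Function.iterate_add_apply, ← heq, ← Function.iterate_add_apply]
    congr 1; omega
  · refine ⟨n, m - n, by omega, fun k hk => ?_⟩
    have : k + (m - n) = (k - n) + m := by omega
    rw [this, Function.iterate_add_apply, heq, ← Function.iterate_add_apply]
    congr 1; omega

lemma sum_range_add' (f : ℕ → ℝ) (a b : ℕ) :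
    ∑ j ∈ Finset.range (a + b), f j
      = ∑ j ∈ Finset.range a, f j + ∑ j ∈ Finset.range b, f (a + j) := by
  induction b with
  | zero => simp
  | succ b ih =>
      rw [show a + (b + 1) = (a + b) + 1 by omega, Finset.sum_range_succ, ih,
        Finset.sum_range_succ]
      ring

lemma cesaro (u : ℕ → ℝ) (K T : ℕ) (hT : 0 < T)
    (hp : ∀ k, K ≤ k → u (k + T) = u k) :
    Filter.Tendsto (fun n : ℕ => (∑ j ∈ Finset.range n, u j) / n) Filter.atTop
      (nhds ((∑ j ∈ Finset.range T, u (K + j)) / T)) := by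
  set S : ℝ := ∑ j ∈ Finset.range T, u (K + j) with hS
  set C : ℝ := ∑ j ∈ Finset.range K, u j with hC
  set L : ℝ := S / T with hL
  have hTL : (T : ℝ) * L = S := by
    rw [hL, mul_div_cancel₀]
    exact_mod_cast hT.ne'
  have hshift : ∀ q k, K ≤ k → u (k + q * T) = u k := by
    intro q
    induction q with
    | zero => simp
    | succ q ih =>
        intro k hk
        rw [show k + (q + 1) * T = (k + q * T) + T by ring, hp _ (by omega), ih k hk]
  have hq : ∀ q, ∑ j ∈ Finset.range (K + q * T), u j = C + q * S := by
    intro q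
    induction q with
    | zero => simp [hC]
    | succ q ih =>
        rw [show K + (q + 1) * T = (K + q * T) + T by ring, sum_range_add', ih]
        have : ∑ j ∈ Finset.range T, u (K + q * T + j) = S := by
          rw [hS]
          refine Finset.sum_congr rfl fun j _ => ?_
          rw [show K + q * T + j = (K + j) + q * T by ring, hshift q (K + j) (by omega)]
        rw [this]; push_cast; ring
  set B : ℝ := ∑ j ∈ Finset.range K, |u j| + ∑ j ∈ Finset.range T, |u (K + j)|
      + (K + T) * |L| with hB
  have habs : ∀ r, r ≤ T → |∑ j ∈ Finset.range r, u (K + j)| ≤ ∑ j ∈ Finset.range T, |u (K + j)| := by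
    intro r hr
    calc |∑ j ∈ Finset.range r, u (K + j)| ≤ ∑ j ∈ Finset.range r, |u (K + j)| :=
          Finset.abs_sum_le_sum_abs _ _
      _ ≤ ∑ j ∈ Finset.range T, |u (K + j)| :=
          Finset.sum_le_sum_of_subset_of_nonneg (Finset.range_subset_range.2 hr)
            (fun _ _ _ => abs_nonneg _)
  have hDB : ∀ n : ℕ, |∑ j ∈ Finset.range n, u j - n * L| ≤ B := by
    intro n
    rcases le_or_gt K n with hn | hn
    · set q := (n - K) / T with hq'
      set r := (n - K) % T with hr'
      have hrT : r < T := Nat.mod_lt _ hT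
      have hn' : n = K + q * T + r := by
        have h := Nat.div_add_mod (n - K) T
        rw [← hq', ← hr'] at h
        have hcomm : T * q = q * T := Nat.mul_comm _ _
        omega
      have hsum : ∑ j ∈ Finset.range n, u j
          = C + q * S + ∑ j ∈ Finset.range r, u (K + j) := by
        rw [hn', sum_range_add', hq q]
        congr 1
        refine Finset.sum_congr rfl fun j _ => ?_
        rw [show K + q * T + j = (K + j) + q * T by ring, hshift q (K + j) (by omega)]
      have hD : ∑ j ∈ Finset.range n, u j - n * L
          = C + ∑ j ∈ Finset.range r, u (K + j) - (K + r) * L := by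
        rw [hsum, hn']
        push_cast
        have : ((K : ℝ) + q * T + r) * L = K * L + q * (T * L) + r * L := by ring
        rw [this, hTL]; ring
      rw [hD, hB]
      calc |C + ∑ j ∈ Finset.range r, u (K + j) - (K + r) * L|
          ≤ |C| + |∑ j ∈ Finset.range r, u (K + j)| + |(K + r : ℝ) * L| := by
            have := abs_add_le (C + ∑ j ∈ Finset.range r, u (K + j)) (-((K + r : ℝ) * L))
            have h2 := abs_add_le C (∑ j ∈ Finset.range r, u (K + j))
            simp only [abs_neg] at this
            calc |C + ∑ j ∈ Finset.range r, u (K + j) - (K + r) * L|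
                = |(C + ∑ j ∈ Finset.range r, u (K + j)) + -((K + r : ℝ) * L)| := by
                  rw [sub_eq_add_neg]
              _ ≤ |C + ∑ j ∈ Finset.range r, u (K + j)| + |(K + r : ℝ) * L| := this
              _ ≤ |C| + |∑ j ∈ Finset.range r, u (K + j)| + |(K + r : ℝ) * L| := by linarith
        _ ≤ ∑ j ∈ Finset.range K, |u j| + ∑ j ∈ Finset.range T, |u (K + j)|
              + (K + T) * |L| := by
            have h1 : |C| ≤ ∑ j ∈ Finset.range K, |u j| := Finset.abs_sum_le_sum_abs _ _
            have h2 := habs r hrT.le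
            have h3 : |(K + r : ℝ) * L| ≤ (K + T) * |L| := by
              rw [abs_mul]
              have : |(K + r : ℝ)| = (K : ℝ) + r := by
                rw [abs_of_nonneg]; positivity
              rw [this]
              have : (r : ℝ) ≤ T := by exact_mod_cast hrT.le
              nlinarith [abs_nonneg L]
            linarith
    · rw [hB]
      have h1 : |∑ j ∈ Finset.range n, u j| ≤ ∑ j ∈ Finset.range K, |u j| := by
        calc |∑ j ∈ Finset.range n, u j| ≤ ∑ j ∈ Finset.range n, |u j| :=
              Finset.abs_sum_le_sum_abs _ _
          _ ≤ ∑ j ∈ Finset.range K, |u j| :=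
              Finset.sum_le_sum_of_subset_of_nonneg (Finset.range_subset_range.2 hn.le)
                (fun _ _ _ => abs_nonneg _)
      have h3 : |(n : ℝ) * L| ≤ (K + T) * |L| := by
        rw [abs_mul]
        have hn2 : |(n : ℝ)| = (n : ℝ) := abs_of_nonneg (by positivity)
        rw [hn2]
        have : (n : ℝ) ≤ K + T := by
          have : (n : ℝ) ≤ K := by exact_mod_cast hn.le
          have hT' : (0:ℝ) ≤ T := by positivity
          linarith
        nlinarith [abs_nonneg L]
      have h2 : (0:ℝ) ≤ ∑ j ∈ Finset.range T, |u (K + j)| :=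
        Finset.sum_nonneg fun _ _ => abs_nonneg _
      calc |∑ j ∈ Finset.range n, u j - n * L|
          ≤ |∑ j ∈ Finset.range n, u j| + |(n:ℝ) * L| := abs_sub _ _
        _ ≤ _ := by linarith
  have h0 : Filter.Tendsto (fun n : ℕ => (∑ j ∈ Finset.range n, u j) / n - L)
      Filter.atTop (nhds 0) := by
    refine squeeze_zero_norm' ?_ (tendsto_const_div_atTop_nhds_zero_nat B)
    filter_upwards [Filter.eventually_ge_atTop 1] with n hn
    have hn0 : (n : ℝ) ≠ 0 := by positivity
    have : (∑ j ∈ Finset.range n, u j) / n - L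
        = (∑ j ∈ Finset.range n, u j - n * L) / n := by
      field_simp
    rw [this, Real.norm_eq_abs, abs_div, abs_of_nonneg (show (0:ℝ) ≤ (n:ℝ) by positivity)]
    gcongr
    exact hDB n
  have h1 := h0.add_const L
  simp only [zero_add] at h1
  convert h1 using 2 with n
  ring

/-- In a mean-payoff game with weight functions `w i`, let `wSum` be the
summed weight function `wSum s = ∑ i, w i s`. For every profile `σ` of finite-state
strategies and every state `s`, the mean-payoff of the induced path `π(σ, s)` with respect
to `wSum` equals the sum over the players of their payoffs; in particular a dummy player
whose weight function is `wSum` receives as payoff exactly the utilitarian social welfare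
`usw(σ) = ∑ i, pay_i(π(σ, s))`. -/
theorem pay_sum_weights_eq_usw {N Ac St : Type}
    [Fintype N] [Nonempty N] [DecidableEq N]
    [Fintype Ac] [Nonempty Ac] [Fintype St] [Nonempty St]
    (A : Arena N Ac St) (w : N → St → ℤ)
    (σ : ∀ _ : N, Strategy N Ac) (s : St) :
    pay (fun st => ∑ i : N, w i st) (play A σ s) =
      ∑ i : N, pay (w i) (play A σ s) := by
  classical
  set F : St × (∀ i : N, (σ i).Q) → St × (∀ i : N, (σ i).Q) :=
    fun p => (A.tr p.1 (fun i => (σ i).act (p.2 i)),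
      fun i => (σ i).δ (p.2 i) (fun j => (σ j).act (p.2 j))) with hF
  have hiter : ∀ k, runAux A σ s k = F^[k] (s, fun i => (σ i).q0) := by
    intro k
    induction k with
    | zero => rfl
    | succ k ih => rw [Function.iterate_succ_apply', ← ih]; rfl
  obtain ⟨K, T, hT, hper⟩ := iterate_ev_periodic F (s, fun i => (σ i).q0)
  have hstate : ∀ k, K ≤ k → (play A σ s (k + T)).1 = (play A σ s k).1 := by
    intro k hk
    simp only [play, hiter, hper k hk]
  have key : ∀ v : St → ℤ,
      pay v (play A σ s)
        = (∑ j ∈ Finset.range T, (v ((play A σ s (K + j)).1) : ℝ)) / T := by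
    intro v
    have h := cesaro (fun j => (v ((play A σ s j).1) : ℝ)) K T hT
      (fun k hk => by rw [hstate k hk])
    exact h.liminf_eq
  simp only [key]
  rw [← Finset.sum_div]
  congr 1
  push_cast
  exact Finset.sum_comm
end
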